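/- arXiv:1710.08800 — 10 statements merged into one kernel-verified Lean document; each statement's English description precedes it below -/
import Mathlib

section
/- Let N ≥ 1 and let S_1, …, S_N be finite nonempty sets. Suppose there exists a function t : S_1 × ⋯ × S_N → ℝ such that for every player i, every tuple s_{-i} of components of the other players, and every pair s_i, ŝ_i ∈ S_i, one has t_i(s_i, s_{-i}) − t_i(ŝ_i, s_{-i}) = t(s_i, s_{-i}) − t(ŝ_i, s_{-i}). Then the function T̂(z) = Σ_{s ∈ S_1×⋯×S_N} (∏_{l=1}^N z_l(s_l)) · t(s) is an exact potential for the payoffs T_i: for every player i, every pair of mixed strategies z_i, ẑ_i of player i, and every mixed profile z_{-i} of the other players, T_i(z_i, z_{-i}) − T_i(ẑ_i, z_{-i}) = T̂(z_i, z_{-i}) − T̂(ẑ_i, z_{-i}). -/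
/-- If there is a function `t` such that for every player `i`,
every tuple of the other players' components, and every pair of own components,
the payoff differences of `t i` agree with those of `t`, then the multilinear
extension `T̂(z) = ∑_s (∏_l z_l(s_l)) t(s)` is an exact potential for the
expected payoffs `T_i(z) = ∑_s (∏_l z_l(s_l)) t_i(s)`. -/
theorem potential_function_mixed_extension
    {N : ℕ} (hN : 1 ≤ N) (S : Fin N → Type*)
    [∀ i, Fintype (S i)] [∀ i, Nonempty (S i)]
    (t : (∀ j, S j) → ℝ) (ti : ∀ _ : Fin N, (∀ j, S j) → ℝ)
    (hpot : ∀ (i : Fin N) (x : ∀ j, S j) (x' : S i),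
      ti i x - ti i (Function.update x i x') = t x - t (Function.update x i x'))
    (z : ∀ j, S j → ℝ) (hz0 : ∀ j xj, 0 ≤ z j xj) (hz1 : ∀ j, ∑ xj, z j xj = 1)
    (i : Fin N) (zi' : S i → ℝ) (hz0' : ∀ xi, 0 ≤ zi' xi) (hz1' : ∑ xi, zi' xi = 1) :
    (∑ x : ∀ j, S j, (∏ l, z l (x l)) * ti i x)
      - (∑ x : ∀ j, S j, (∏ l, Function.update z i zi' l (x l)) * ti i x)
    = (∑ x : ∀ j, S j, (∏ l, z l (x l)) * t x)
      - (∑ x : ∀ j, S j, (∏ l, Function.update z i zi' l (x l)) * t x) := by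
  classical
  set g : (∀ j, S j) → ℝ := fun x => ti i x - t x with hg_def
  have hg : ∀ (x : ∀ j, S j) (x' : S i), g (Function.update x i x') = g x := by
    intro x x'
    have := hpot i x x'
    simp only [hg_def]
    linarith
  set e := Equiv.piSplitAt i S with he
  have c : S i := Classical.arbitrary _
  have hsymm : ∀ (y : S i) (p : ∀ j : {j // j ≠ i}, S j),
      e.symm (y, p) = Function.update (e.symm (c, p)) i y := by
    intro y p
    funext j
    by_cases h : j = i
    · subst h
      simp [he, Equiv.piSplitAt, Function.update_self]
    · simp [he, Equiv.piSplitAt, h, Function.update_of_ne h]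
  -- key lemma
  have key : ∀ w : S i → ℝ, (∑ xi, w xi = 1) →
      ∑ x : ∀ j, S j, (∏ l, Function.update z i w l (x l)) * g x
      = ∑ p : ∀ j : {j // j ≠ i}, S j,
          (∏ l : {j // j ≠ i}, z l (p l)) * g (e.symm (c, p)) := by
    intro w hw
    rw [← Equiv.sum_comp e.symm, Fintype.sum_prod_type]
    have step : ∀ (y : S i) (p : ∀ j : {j // j ≠ i}, S j),
        (∏ l, Function.update z i w l ((e.symm (y, p)) l)) * g (e.symm (y, p))
        = w y * ((∏ l : {j // j ≠ i}, z l (p l)) * g (e.symm (c, p))) := by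
      intro y p
      have hgval : g (e.symm (y, p)) = g (e.symm (c, p)) := by
        rw [hsymm y p, hg]
      have hprod : (∏ l, Function.update z i w l ((e.symm (y, p)) l))
          = w y * ∏ l : {j // j ≠ i}, z l (p l) := by
        rw [Fintype.prod_eq_mul_prod_compl i]
        congr 1
        · simp [he, Equiv.piSplitAt]
        · rw [Finset.prod_subtype (p := fun j => j ≠ i) ({i}ᶜ : Finset (Fin N)) (fun x => by simp)
            (fun l => Function.update z i w l ((e.symm (y, p)) l))]
          apply Finset.prod_congr rfl
          intro l _
          have hl : (l : Fin N) ≠ i := l.2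
          simp [he, Equiv.piSplitAt, hl, Function.update_of_ne hl]
      rw [hprod, hgval]
      ring
    calc ∑ y, ∑ p, (∏ l, Function.update z i w l ((e.symm (y, p)) l)) * g (e.symm (y, p))
        = ∑ y, ∑ p, w y * ((∏ l : {j // j ≠ i}, z l (p l)) * g (e.symm (c, p))) := by
          refine Finset.sum_congr rfl fun y _ => Finset.sum_congr rfl fun p _ => step y p
      _ = (∑ y, w y) * ∑ p, (∏ l : {j // j ≠ i}, z l (p l)) * g (e.symm (c, p)) := by
          rw [Finset.sum_mul]
          exact Finset.sum_congr rfl fun y _ => (Finset.mul_sum _ _ _).symm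
      _ = _ := by rw [hw, one_mul]
  have h1 : ∑ x : ∀ j, S j, (∏ l, z l (x l)) * g x
      = ∑ x : ∀ j, S j, (∏ l, Function.update z i zi' l (x l)) * g x := by
    have hz' : z = Function.update z i (z i) := (Function.update_eq_self i z).symm
    rw [key zi' hz1']
    nth_rewrite 1 [hz']
    rw [key (z i) (hz1 i)]
  have expand : ∀ w : ∀ j, S j → ℝ,
      ∑ x : ∀ j, S j, (∏ l, w l (x l)) * g x
      = (∑ x : ∀ j, S j, (∏ l, w l (x l)) * ti i x)
        - ∑ x : ∀ j, S j, (∏ l, w l (x l)) * t x := by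
    intro w
    rw [← Finset.sum_sub_distrib]
    exact Finset.sum_congr rfl fun x _ => by simp [hg_def, mul_sub]
  rw [expand, expand] at h1
  linarith
end

section
/- Let N ≥ 1, let S_1, …, S_N be finite nonempty sets, let N₀ > 0, and for each player i let s_i : S_i → ℝ with s_i(x_i) ≥ 0 for all x_i ∈ S_i. Define the payoff t_i(x) = log₂(1 + s_i(x_i)/(N₀ + Σ_{j ≠ i} s_j(x_j))) for x ∈ S_1 × ⋯ × S_N, and define t(x) = log₂(1 + (Σ_{j=1}^N s_j(x_j))/N₀). Then T̂(z) = Σ_{x} (∏_{l=1}^N z_l(x_l)) · t(x) is an exact potential for the expected payoffs T_i: for every player i, every pair of mixed strategies z_i, ẑ_i of player i, and every mixed profile z_{-i}, T_i(z_i, z_{-i}) − T_i(ẑ_i, z_{-i}) = T̂(z_i, z_{-i}) − T̂(ẑ_i, z_{-i}). -/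
open Finset

private lemma aux_sum_indep {N : ℕ} {S : Fin N → Type*} [∀ i, Fintype (S i)]
    [∀ i, Nonempty (S i)] (i : Fin N) (w₁ w₂ : S i → ℝ)
    (h : ∑ a, w₁ a = ∑ a, w₂ a)
    (G : (∀ j, S j) → ℝ) (hG : ∀ x a, G (Function.update x i a) = G x) :
    ∑ x : ∀ j, S j, w₁ (x i) * G x = ∑ x : ∀ j, S j, w₂ (x i) * G x := by
  have key : ∀ w : S i → ℝ, ∑ x : ∀ j, S j, w (x i) * G x
      = ∑ y : ∀ j : {j // j ≠ i}, S j, (∑ a, w a) *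
          G ((Equiv.piSplitAt i S).symm (Classical.arbitrary (S i), y)) := by
    intro w
    rw [← Equiv.sum_comp (Equiv.piSplitAt i S).symm fun x => w (x i) * G x]
    rw [Fintype.sum_prod_type_right]
    refine Finset.sum_congr rfl fun y _ => ?_
    rw [Finset.sum_mul]
    refine Finset.sum_congr rfl fun a _ => ?_
    have h1 : ((Equiv.piSplitAt i S).symm (a, y)) i = a := by simp
    have h2 : Function.update ((Equiv.piSplitAt i S).symm (a, y)) i
        (Classical.arbitrary (S i))
        = (Equiv.piSplitAt i S).symm (Classical.arbitrary (S i), y) := by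
      funext j
      by_cases hj : j = i
      · subst hj; simp
      · simp [Function.update_of_ne hj, Equiv.piSplitAt, hj]
    rw [h1, ← hG ((Equiv.piSplitAt i S).symm (a, y)) (Classical.arbitrary (S i)), h2]
  rw [key w₁, key w₂, h]

/-- For the interference-channel payoffs
`t_i(x) = log₂(1 + s_i(x_i)/(N₀ + ∑_{j≠i} s_j(x_j)))`, the multilinear extension of
`t(x) = log₂(1 + (∑_j s_j(x_j))/N₀)` is an exact potential for the expected payoffs. -/
theorem interference_game_has_exact_potential
    {N : ℕ} (hN : 1 ≤ N) (S : Fin N → Type*)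
    [∀ i, Fintype (S i)] [∀ i, Nonempty (S i)]
    (N₀ : ℝ) (hN₀ : 0 < N₀)
    (s : ∀ i : Fin N, S i → ℝ) (hs : ∀ i xi, 0 ≤ s i xi)
    (z : ∀ j, S j → ℝ) (hz0 : ∀ j xj, 0 ≤ z j xj) (hz1 : ∀ j, ∑ xj, z j xj = 1)
    (i : Fin N) (zi' : S i → ℝ) (hz0' : ∀ xi, 0 ≤ zi' xi) (hz1' : ∑ xi, zi' xi = 1) :
    (∑ x : ∀ j, S j, (∏ l, z l (x l)) *
        Real.logb 2 (1 + s i (x i) / (N₀ + ∑ j ∈ Finset.univ.erase i, s j (x j))))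
      - (∑ x : ∀ j, S j, (∏ l, Function.update z i zi' l (x l)) *
          Real.logb 2 (1 + s i (x i) / (N₀ + ∑ j ∈ Finset.univ.erase i, s j (x j))))
    = (∑ x : ∀ j, S j, (∏ l, z l (x l)) *
        Real.logb 2 (1 + (∑ j, s j (x j)) / N₀))
      - (∑ x : ∀ j, S j, (∏ l, Function.update z i zi' l (x l)) *
          Real.logb 2 (1 + (∑ j, s j (x j)) / N₀)) := by
  classical
  set A : (∀ j, S j) → ℝ := fun x => ∑ j ∈ Finset.univ.erase i, s j (x j) with hA
  have hA0 : ∀ x, 0 ≤ A x := fun x => Finset.sum_nonneg fun j _ => hs j (x j)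
  have hApos : ∀ x, 0 < N₀ + A x := fun x => by linarith [hA0 x]
  -- the key pointwise identity
  have hti : ∀ x : ∀ j, S j,
      Real.logb 2 (1 + s i (x i) / (N₀ + A x))
        = Real.logb 2 (1 + (∑ j, s j (x j)) / N₀)
          + (Real.logb 2 N₀ - Real.logb 2 (N₀ + A x)) := by
    intro x
    have hsum : A x + s i (x i) = ∑ j, s j (x j) := by
      rw [hA]; exact Finset.sum_erase_add _ _ (Finset.mem_univ i)
    have hSpos : 0 < N₀ + ∑ j, s j (x j) := by
      have := Finset.sum_nonneg (fun j (_ : j ∈ (Finset.univ : Finset (Fin N))) => hs j (x j))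
      linarith
    have e1 : 1 + s i (x i) / (N₀ + A x) = (N₀ + ∑ j, s j (x j)) / (N₀ + A x) := by
      rw [eq_div_iff (hApos x).ne', add_mul, one_mul, div_mul_cancel₀ _ (hApos x).ne']
      linarith [hsum]
    have e2 : 1 + (∑ j, s j (x j)) / N₀ = (N₀ + ∑ j, s j (x j)) / N₀ := by
      rw [eq_div_iff hN₀.ne', add_mul, one_mul, div_mul_cancel₀ _ hN₀.ne']
    rw [e1, e2, Real.logb_div (ne_of_gt hSpos) (ne_of_gt (hApos x)),
      Real.logb_div (ne_of_gt hSpos) (ne_of_gt hN₀)]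
    ring
  have hFi : ∀ x : ∀ j, S j, ∀ a : S i, A (Function.update x i a) = A x := by
    intro x a
    refine Finset.sum_congr rfl fun j hj => ?_
    rw [Function.update_of_ne (Finset.ne_of_mem_erase hj)]
  -- split the products
  have hprod1 : ∀ x : ∀ j, S j, (∏ l, z l (x l))
      = z i (x i) * ∏ l ∈ Finset.univ.erase i, z l (x l) :=
    fun x => (Finset.mul_prod_erase _ _ (Finset.mem_univ i)).symm
  have hprod2 : ∀ x : ∀ j, S j, (∏ l, Function.update z i zi' l (x l))
      = zi' (x i) * ∏ l ∈ Finset.univ.erase i, z l (x l) := by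
    intro x
    rw [← Finset.mul_prod_erase _ _ (Finset.mem_univ i), Function.update_self]
    congr 1
    exact Finset.prod_congr rfl fun l hl => by
      rw [Function.update_of_ne (Finset.ne_of_mem_erase hl)]
  set G : (∀ j, S j) → ℝ := fun x =>
    (∏ l ∈ Finset.univ.erase i, z l (x l)) *
      (Real.logb 2 N₀ - Real.logb 2 (N₀ + A x)) with hG
  have hGindep : ∀ x a, G (Function.update x i a) = G x := by
    intro x a
    rw [hG]
    simp only
    rw [hFi x a]
    congr 1
    exact Finset.prod_congr rfl fun l hl => by
      rw [Function.update_of_ne (Finset.ne_of_mem_erase hl)]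
  have key : ∑ x : ∀ j, S j, z i (x i) * G x = ∑ x : ∀ j, S j, zi' (x i) * G x :=
    aux_sum_indep i (z i) zi' (by rw [hz1 i, hz1']) G hGindep
  have expand : ∀ w : (∀ j, S j) → ℝ,
      (∀ x : ∀ j, S j, w x = (if True then w x else 0)) → True := fun _ _ => trivial
  have split : ∀ (p : (∀ j, S j) → ℝ),
      (∑ x : ∀ j, S j, p x * Real.logb 2 (1 + s i (x i) / (N₀ + A x)))
        = (∑ x : ∀ j, S j, p x * Real.logb 2 (1 + (∑ j, s j (x j)) / N₀))
          + ∑ x : ∀ j, S j, p x * (Real.logb 2 N₀ - Real.logb 2 (N₀ + A x)) := by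
    intro p
    rw [← Finset.sum_add_distrib]
    exact Finset.sum_congr rfl fun x _ => by rw [hti x, mul_add]
  calc (∑ x : ∀ j, S j, (∏ l, z l (x l)) * Real.logb 2 (1 + s i (x i) / (N₀ + A x)))
        - (∑ x : ∀ j, S j, (∏ l, Function.update z i zi' l (x l)) *
            Real.logb 2 (1 + s i (x i) / (N₀ + A x)))
      = ((∑ x : ∀ j, S j, (∏ l, z l (x l)) * Real.logb 2 (1 + (∑ j, s j (x j)) / N₀))
          + ∑ x : ∀ j, S j, z i (x i) * G x)
        - ((∑ x : ∀ j, S j, (∏ l, Function.update z i zi' l (x l)) *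
            Real.logb 2 (1 + (∑ j, s j (x j)) / N₀))
          + ∑ x : ∀ j, S j, zi' (x i) * G x) := by
        rw [split, split]
        congr 1
        · congr 1
          exact Finset.sum_congr rfl fun x _ => by rw [hprod1 x, hG, mul_assoc]
        · congr 1
          exact Finset.sum_congr rfl fun x _ => by rw [hprod2 x, hG, mul_assoc]
    _ = (∑ x : ∀ j, S j, (∏ l, z l (x l)) * Real.logb 2 (1 + (∑ j, s j (x j)) / N₀))
        - (∑ x : ∀ j, S j, (∏ l, Function.update z i zi' l (x l)) *
            Real.logb 2 (1 + (∑ j, s j (x j)) / N₀)) := by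
        rw [key]; ring
end

section
/- Let ι be a finite set of players, for each i ∈ ι let Z_i be a finite nonempty strategy set, and let T_i : (Π_{j∈ι} Z_j) → ℝ be payoff functions admitting an exact potential T̂. Then there is no infinite improvement path: there is no sequence z : ℕ → Π_j Z_j such that for every n there exists a player i with z(n+1) differing from z(n) only in the i-th coordinate and T_i(z(n+1)) > T_i(z(n)). -/
/-- In a finite game admitting an exact potential there is no infinite
improvement path: no sequence of profiles in which each successive profile is obtained
by a single player unilaterally deviating and strictly increasing their own payoff. -/
theorem no_infinite_improvement_path
    {ι : Type*} [Fintype ι] [DecidableEq ι] (Z : ι → Type*)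
    [∀ i, Fintype (Z i)] [∀ i, Nonempty (Z i)]
    (T : ι → (∀ j, Z j) → ℝ) (Tpot : (∀ j, Z j) → ℝ)
    (hpot : ∀ (i : ι) (z : ∀ j, Z j) (v : Z i),
      T i z - T i (Function.update z i v) = Tpot z - Tpot (Function.update z i v)) :
    ¬ ∃ z : ℕ → ∀ j, Z j, ∀ n : ℕ, ∃ i : ι,
        (∀ j, j ≠ i → z (n + 1) j = z n j) ∧ T i (z n) < T i (z (n + 1)) := by
  rintro ⟨z, hz⟩
  have hstep : ∀ n, Tpot (z n) < Tpot (z (n + 1)) := by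
    intro n
    obtain ⟨i, hoff, hlt⟩ := hz n
    have hupd : Function.update (z n) i (z (n + 1) i) = z (n + 1) := by
      funext j
      by_cases hj : j = i
      · subst hj; simp
      · rw [Function.update_of_ne hj, hoff j hj]
    have := hpot i (z n) (z (n + 1) i)
    rw [hupd] at this
    linarith
  have hmono : StrictMono (fun n => Tpot (z n)) := strictMono_nat_of_lt_succ hstep
  have hinj : Function.Injective z := fun a b hab => hmono.injective (by simp [hab])
  exact not_injective_infinite_finite z hinj
end

section
/- Let ι be a set of players, for each i ∈ ι let Z_i be a nonempty strategy set, and let T_i : (Π_{j∈ι} Z_j) → ℝ admit an exact potential T̂ that is bounded above by B ∈ ℝ. Let ε > 0 and let z(0), z(1), …, z(n) be a finite sequence of profiles such that for each 0 ≤ k < n there is a player i with z(k+1) differing from z(k) only in the i-th coordinate and T_i(z(k+1)) > T_i(z(k)) + ε. Then n ≤ (B − T̂(z(0)))/ε. -/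
/-- If a game admits an exact potential bounded above by `B`, then any
improvement path along which each deviating player gains more than `ε > 0` has length
at most `(B − T̂(z 0))/ε`. -/
theorem improvement_path_length_bound
    {ι : Type*} [DecidableEq ι] (Z : ι → Type*) [∀ i, Nonempty (Z i)]
    (T : ι → (∀ j, Z j) → ℝ) (Tpot : (∀ j, Z j) → ℝ)
    (hpot : ∀ (i : ι) (z : ∀ j, Z j) (v : Z i),
      T i z - T i (Function.update z i v) = Tpot z - Tpot (Function.update z i v))
    (B : ℝ) (hB : ∀ z : ∀ j, Z j, Tpot z ≤ B)
    (ε : ℝ) (hε : 0 < ε) (n : ℕ) (z : ℕ → ∀ j, Z j)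
    (hstep : ∀ k < n, ∃ i : ι,
      (∀ j, j ≠ i → z (k + 1) j = z k j) ∧ T i (z k) + ε < T i (z (k + 1))) :
    (n : ℝ) ≤ (B - Tpot (z 0)) / ε := by
  have key : ∀ k ≤ n, Tpot (z 0) + k * ε ≤ Tpot (z k) := by
    intro k hk
    induction k with
    | zero => simp
    | succ k ih =>
      obtain ⟨i, hfix, hgain⟩ := hstep k (Nat.lt_of_succ_le hk)
      have hupd : Function.update (z k) i (z (k + 1) i) = z (k + 1) := by
        funext j
        by_cases hj : j = i
        · subst hj; simp
        · simp [Function.update_of_ne hj, hfix j hj]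
      have := hpot i (z k) (z (k + 1) i)
      rw [hupd] at this
      have ih' := ih (Nat.le_of_succ_le hk)
      push_cast
      nlinarith
  have h := key n le_rfl
  have hBn := hB (z n)
  rw [le_div_iff₀ hε]
  nlinarith
end

section
/- Let (Ω, F, P) be a probability space, let k ≥ 1 be an integer, let N₀ > 0, and let 0 < μ ≤ b. Let (X_j)_{j≥1} be independent random variables with 0 ≤ X_j ≤ b almost surely and E[X_j] ≥ μ for every j. Then there exist constants c₁ > 0, c₂ > 0 and a natural number N* such that for all N ≥ N*, c₁/N^k ≤ E[ (Σ_{j=1}^N X_j + N₀)^{−k} ] ≤ c₂/N^k. -/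
open MeasureTheory ProbabilityTheory

private lemma exp_neg_le_quad {u : ℝ} (hu : 0 ≤ u) :
    Real.exp (-u) ≤ 1 - u + u ^ 2 / 2 := by
  have h := Real.quadratic_le_exp_of_nonneg hu
  have hpos : (0:ℝ) < 1 + u + u ^ 2 / 2 := by positivity
  have hq : (0:ℝ) < 1 - u + u ^ 2 / 2 := by nlinarith [sq_nonneg (u - 1)]
  rw [Real.exp_neg]
  have h1 : (Real.exp u)⁻¹ ≤ (1 + u + u ^ 2 / 2)⁻¹ := by
    apply inv_anti₀ hpos h
  refine h1.trans ?_
  rw [inv_le_iff_one_le_mul₀ hpos]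
  nlinarith [sq_nonneg u, sq_nonneg (u^2)]

/-- For independent random variables `X_j` bounded in `[0, b]` a.s. with
means at least `μ > 0`, the expectation `E[(∑_{j<N} X_j + N₀)^{-k}]` is `Θ(N^{-k})`:
eventually bounded between `c₁/N^k` and `c₂/N^k`. -/
theorem inv_pow_sum_expectation_theta
    {Ω : Type*} [MeasurableSpace Ω] (P : Measure Ω) [IsProbabilityMeasure P]
    (k : ℕ) (hk : 1 ≤ k) (N₀ : ℝ) (hN₀ : 0 < N₀)
    (μ b : ℝ) (hμ : 0 < μ) (hμb : μ ≤ b)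
    (X : ℕ → Ω → ℝ) (hmeas : ∀ j, Measurable (X j))
    (hindep : iIndepFun X P)
    (hbdd : ∀ j, ∀ᵐ ω ∂P, 0 ≤ X j ω ∧ X j ω ≤ b)
    (hmean : ∀ j, μ ≤ ∫ ω, X j ω ∂P) :
    ∃ c₁ > (0 : ℝ), ∃ c₂ > (0 : ℝ), ∃ Nstar : ℕ, ∀ N : ℕ, Nstar ≤ N →
      c₁ / (N : ℝ) ^ k ≤ (∫ ω, ((∑ j ∈ Finset.range N, X j ω + N₀) ^ k)⁻¹ ∂P) ∧
      (∫ ω, ((∑ j ∈ Finset.range N, X j ω + N₀) ^ k)⁻¹ ∂P) ≤ c₂ / (N : ℝ) ^ k := by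
  have hb : 0 < b := hμ.trans_le hμb
  set t : ℝ := μ / b ^ 2 with ht_def
  have ht : 0 < t := by positivity
  set x : ℝ := μ ^ 2 / (2 * b ^ 2) with hx_def
  have hx : 0 < x := by positivity
  have hx2 : x ≤ 1 / 2 := by
    rw [hx_def, div_le_div_iff₀ (by positivity) (by norm_num)]
    nlinarith
  set r : ℝ := Real.exp x * (1 - x) with hr_def
  have hr0 : 0 ≤ r := by
    have : (0:ℝ) ≤ 1 - x := by linarith
    positivity
  have hr1 : r < 1 := by
    have h1 : 1 - x < Real.exp (-x) := by
      have := Real.add_one_lt_exp (x := -x) (by linarith [hx.ne'] : (-x : ℝ) ≠ 0)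
      linarith
    rw [Real.exp_neg] at h1
    have := (mul_lt_mul_of_pos_left h1 (Real.exp_pos x)).trans_le
      (le_of_eq (mul_inv_cancel₀ (Real.exp_pos x).ne'))
    simpa [hr_def] using this
  -- integrability of exp(-t * X j)
  have hint_exp : ∀ j, Integrable (fun ω => Real.exp (-t * X j ω)) P := by
    intro j
    refine (integrable_const (1:ℝ)).mono' (((hmeas j).const_mul (-t)).exp).aestronglyMeasurable ?_
    filter_upwards [hbdd j] with ω hω
    rw [Real.norm_eq_abs, abs_of_pos (Real.exp_pos _), ← Real.exp_zero]
    apply Real.exp_le_exp.2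
    nlinarith [hω.1, ht.le]
  -- mgf bound
  have hmgf : ∀ j, mgf (X j) P (-t) ≤ 1 - x := by
    intro j
    have hXint : Integrable (X j) P := by
      refine (integrable_const b).mono' (hmeas j).aestronglyMeasurable ?_
      filter_upwards [hbdd j] with ω hω
      rw [Real.norm_eq_abs, abs_of_nonneg hω.1]; exact hω.2
    have hupper : ∫ ω, Real.exp (-t * X j ω) ∂P ≤
        ∫ ω, (1 + t ^ 2 * b ^ 2 / 2 - t * X j ω) ∂P := by
      refine integral_mono_ae (hint_exp j) (((integrable_const _)).sub (hXint.const_mul t)) ?_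
      filter_upwards [hbdd j] with ω hω
      have h1 : Real.exp (-(t * X j ω)) ≤ 1 - t * X j ω + (t * X j ω) ^ 2 / 2 :=
        exp_neg_le_quad (by nlinarith [hω.1, ht.le])
      have h2 : (t * X j ω) ^ 2 ≤ t ^ 2 * b ^ 2 := by
        nlinarith [pow_le_pow_left₀ hω.1 hω.2 2, sq_nonneg t, ht.le]
      simp only [neg_mul] at h1 ⊢
      linarith
    have heq : ∫ ω, (1 + t ^ 2 * b ^ 2 / 2 - t * X j ω) ∂P
        = 1 + t ^ 2 * b ^ 2 / 2 - t * ∫ ω, X j ω ∂P := by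
      rw [integral_sub (integrable_const _) (hXint.const_mul t), integral_const,
        integral_const_mul]
      simp
    have hfin : 1 + t ^ 2 * b ^ 2 / 2 - t * ∫ ω, X j ω ∂P ≤ 1 - x := by
      have h3 : t * μ ≤ t * ∫ ω, X j ω ∂P := mul_le_mul_of_nonneg_left (hmean j) ht.le
      have h4 : t * μ = 2 * x := by rw [ht_def, hx_def]; field_simp
      have h6 : t ^ 2 * b ^ 2 / 2 = x := by
        rw [ht_def, hx_def]; field_simp
      linarith
    calc mgf (X j) P (-t) = ∫ ω, Real.exp (-t * X j ω) ∂P := rfl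
      _ ≤ _ := hupper
      _ = _ := heq
      _ ≤ 1 - x := hfin
  -- tail bound
  have htail : ∀ N : ℕ, (P {ω | ∑ j ∈ Finset.range N, X j ω ≤ μ * N / 2}).toReal ≤ r ^ N := by
    intro N
    have hSint : Integrable (fun ω => Real.exp (-t * (∑ j ∈ Finset.range N, X j) ω)) P :=
      hindep.integrable_exp_mul_sum hmeas (fun i _ => hint_exp i)
    have hset : {ω | ∑ j ∈ Finset.range N, X j ω ≤ μ * N / 2}
        = {ω | (∑ j ∈ Finset.range N, X j) ω ≤ μ * N / 2} := by
      ext ω; simp [Finset.sum_apply]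
    have hch := measure_le_le_exp_mul_mgf (μ := P) (X := ∑ j ∈ Finset.range N, X j)
      (μ * N / 2) (neg_nonpos.2 ht.le) hSint
    rw [hset]
    refine hch.trans ?_
    rw [iIndepFun.mgf_sum hindep hmeas]
    have hprod : ∏ j ∈ Finset.range N, mgf (X j) P (-t) ≤ (1 - x) ^ N := by
      calc ∏ j ∈ Finset.range N, mgf (X j) P (-t) ≤ ∏ _j ∈ Finset.range N, (1 - x) :=
            Finset.prod_le_prod (fun j _ => mgf_nonneg) (fun j _ => hmgf j)
        _ = (1 - x) ^ N := by simp
    have hexp : Real.exp (-(-t) * (μ * N / 2)) = (Real.exp x) ^ N := by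
      rw [← Real.exp_nat_mul]
      congr 1
      rw [ht_def, hx_def]; field_simp
    rw [hexp]
    calc (Real.exp x) ^ N * ∏ j ∈ Finset.range N, mgf (X j) P (-t)
        ≤ (Real.exp x) ^ N * (1 - x) ^ N := by
          apply mul_le_mul_of_nonneg_left hprod (by positivity)
      _ = r ^ N := by rw [hr_def, mul_pow]
  -- choose Nstar
  obtain ⟨N₁, hN₁⟩ := (Filter.tendsto_atTop'.1
    (tendsto_pow_const_mul_const_pow_of_lt_one k hr0 hr1) (Set.Iio 1) (by
      simpa using Iio_mem_nhds one_pos)) 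
  have hrN : ∀ N : ℕ, N₁ ≤ N → 1 ≤ N → r ^ N ≤ ((N : ℝ) ^ k)⁻¹ := by
    intro N hN hN1
    have hNpos : (0:ℝ) < (N:ℝ) ^ k := by positivity
    have h := hN₁ N hN
    simp only [Set.mem_Iio] at h
    calc r ^ N = ((N:ℝ) ^ k)⁻¹ * ((N:ℝ) ^ k * r ^ N) := by
          rw [← mul_assoc, inv_mul_cancel₀ hNpos.ne', one_mul]
      _ ≤ ((N:ℝ) ^ k)⁻¹ * 1 := mul_le_mul_of_nonneg_left h.le (by positivity)
      _ = ((N:ℝ) ^ k)⁻¹ := mul_one _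
  refine ⟨((b + N₀) ^ k)⁻¹, by positivity, (N₀ ^ k)⁻¹ + (2 / μ) ^ k, by positivity,
    max N₁ 1, fun N hN => ?_⟩
  have hN1 : 1 ≤ N := le_trans (le_max_right _ _) hN
  have hNN₁ : N₁ ≤ N := le_trans (le_max_left _ _) hN
  have hNR : (1:ℝ) ≤ (N:ℝ) := by exact_mod_cast hN1
  have hNpos : (0:ℝ) < (N:ℝ) ^ k := by positivity
  set S : Ω → ℝ := fun ω => ∑ j ∈ Finset.range N, X j ω with hS_def
  have hSmeas : Measurable S := Finset.measurable_sum _ (fun j _ => hmeas j)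
  have hbdd' : ∀ᵐ ω ∂P, ∀ j ∈ Finset.range N, 0 ≤ X j ω ∧ X j ω ≤ b :=
    (ae_ball_iff (Finset.range N).countable_toSet).2 (fun j _ => hbdd j)
  have hSbd : ∀ᵐ ω ∂P, 0 ≤ S ω ∧ S ω ≤ b * N := by
    filter_upwards [hbdd'] with ω hω
    constructor
    · exact Finset.sum_nonneg (fun j hj => (hω j hj).1)
    · calc S ω ≤ ∑ j ∈ Finset.range N, b := Finset.sum_le_sum (fun j hj => (hω j hj).2)
        _ = b * N := by simp [mul_comm]
  set f : Ω → ℝ := fun ω => ((S ω + N₀) ^ k)⁻¹ with hf_def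
  have hfmeas : Measurable f := (((hSmeas.add_const N₀).pow_const k)).inv
  have hfint : Integrable f P := by
    refine (integrable_const ((N₀ ^ k)⁻¹)).mono' hfmeas.aestronglyMeasurable ?_
    filter_upwards [hSbd] with ω hω
    have h1 : (0:ℝ) < N₀ ^ k := by positivity
    have h2 : N₀ ^ k ≤ (S ω + N₀) ^ k := by
      apply pow_le_pow_left₀ hN₀.le (by linarith [hω.1])
    rw [Real.norm_eq_abs, abs_of_nonneg (inv_nonneg.2 (pow_nonneg (by linarith [hω.1, hN₀.le]) k))]
    exact inv_anti₀ h1 h2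
  constructor
  · -- lower bound
    have hlow : ∀ᵐ ω ∂P, (((b + N₀) * N) ^ k)⁻¹ ≤ f ω := by
      filter_upwards [hSbd] with ω hω
      have h1 : (0:ℝ) < S ω + N₀ := by linarith [hω.1]
      have h2 : S ω + N₀ ≤ (b + N₀) * N := by
        have : N₀ * 1 ≤ N₀ * N := mul_le_mul_of_nonneg_left hNR hN₀.le
        nlinarith [hω.2]
      exact inv_anti₀ (by positivity) (pow_le_pow_left₀ h1.le h2 k)
    have := integral_mono_ae (integrable_const _) hfint hlow
    rw [integral_const] at this
    simp only [measureReal_def, measure_univ, ENNReal.toReal_one, smul_eq_mul, one_mul] at this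
    refine le_trans (le_of_eq ?_) this
    rw [mul_pow, mul_inv, div_eq_mul_inv]
  · -- upper bound
    set A : Set Ω := {ω | S ω ≤ μ * N / 2} with hA_def
    have hAmeas : MeasurableSet A := measurableSet_le hSmeas measurable_const
    have hmuN : (0:ℝ) < μ * N / 2 := by positivity
    have hup : ∀ᵐ ω ∂P, f ω ≤ A.indicator (fun _ => (N₀ ^ k)⁻¹) ω + ((μ * N / 2) ^ k)⁻¹ := by
      filter_upwards [hSbd] with ω hω
      by_cases hωA : ω ∈ A
      · have h2 : N₀ ^ k ≤ (S ω + N₀) ^ k := pow_le_pow_left₀ hN₀.le (by linarith [hω.1]) k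
        have : f ω ≤ (N₀ ^ k)⁻¹ := inv_anti₀ (by positivity) h2
        rw [Set.indicator_of_mem hωA]
        have : (0:ℝ) ≤ ((μ * N / 2) ^ k)⁻¹ := by positivity
        linarith [inv_anti₀ (show (0:ℝ) < N₀ ^ k by positivity) h2]
      · rw [Set.indicator_of_notMem hωA, zero_add]
        have hωA' : μ * N / 2 < S ω := lt_of_not_ge hωA
        have h2 : (μ * N / 2) ^ k ≤ (S ω + N₀) ^ k :=
          pow_le_pow_left₀ hmuN.le (by linarith) k
        exact inv_anti₀ (by positivity) h2
    have hgint : Integrable (fun ω => A.indicator (fun _ => (N₀ ^ k)⁻¹) ω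
        + ((μ * N / 2) ^ k)⁻¹) P :=
      ((integrable_const _).indicator hAmeas).add (integrable_const _)
    have hIle := integral_mono_ae hfint hgint hup
    rw [integral_add ((integrable_const _).indicator hAmeas) (integrable_const _),
      integral_indicator_const _ hAmeas, integral_const] at hIle
    simp only [measureReal_def, measure_univ, ENNReal.toReal_one, smul_eq_mul, one_mul] at hIle
    have hPA : (P A).toReal ≤ r ^ N := htail N
    have hrN' : r ^ N ≤ ((N:ℝ) ^ k)⁻¹ := hrN N hNN₁ hN1
    have hNne : ((N:ℝ)) ≠ 0 := by positivity
    have hsplit : ((μ * N / 2) ^ k)⁻¹ = (2 / μ) ^ k * ((N:ℝ) ^ k)⁻¹ := by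
      rw [← inv_pow, ← inv_pow, ← mul_pow]
      congr 1
      field_simp
    refine hIle.trans ?_
    rw [hsplit]
    have h2 : ((N₀ ^ k)⁻¹ + (2 / μ) ^ k) / (N:ℝ) ^ k
        = (N₀ ^ k)⁻¹ * ((N:ℝ) ^ k)⁻¹ + (2 / μ) ^ k * ((N:ℝ) ^ k)⁻¹ := by
      field_simp
    rw [h2]
    have h1 : (P A).toReal * (N₀ ^ k)⁻¹ ≤ (N₀ ^ k)⁻¹ * ((N:ℝ) ^ k)⁻¹ := by
      rw [mul_comm]
      exact mul_le_mul_of_nonneg_left (hPA.trans hrN') (by positivity)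
    linarith [h1]
end

section
/- Let (Ω, F, P) be a probability space, let k ≥ 1 be an integer, let N₀ > 0, and let 0 < μ ≤ b. Let (X_j)_{j≥1} be independent random variables with 0 ≤ X_j ≤ b almost surely and E[X_j] ≥ μ for every j. Then there exist constants c₁ > 0 and c₂ > 0 such that for all N ≥ 1, c₁ ≤ E[ N^k / (Σ_{j=1}^N X_j + N₀)^k ] ≤ c₂. -/
open MeasureTheory ProbabilityTheory

lemma aux_exp_half : Real.exp (-(2⁻¹:ℝ)) ≤ 5/8 := by
  have h1 : Real.exp (2⁻¹:ℝ) * Real.exp (2⁻¹:ℝ) = Real.exp 1 := by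
    rw [← Real.exp_add]; norm_num
  have h2 : (2.7182818283 : ℝ) < Real.exp 1 := Real.exp_one_gt_d9
  have h3 : (0:ℝ) < Real.exp (2⁻¹:ℝ) := Real.exp_pos _
  have h4 : (8/5 : ℝ) ≤ Real.exp (2⁻¹:ℝ) := by nlinarith
  rw [Real.exp_neg]
  rw [inv_le_comm₀ h3 (by norm_num)]
  linarith

/-- Per-variable mgf bound at `t = -(2b)⁻¹`. -/
lemma aux_mgf_bound {Ω : Type*} [MeasurableSpace Ω] (P : Measure Ω) [IsProbabilityMeasure P]
    (μ b : ℝ) (hμ : 0 < μ) (hμb : μ ≤ b) (X : Ω → ℝ) (hX : Measurable X)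
    (hbdd : ∀ᵐ ω ∂P, 0 ≤ X ω ∧ X ω ≤ b) (hmean : μ ≤ ∫ ω, X ω ∂P) :
    ∫ ω, Real.exp (-(2*b)⁻¹ * X ω) ∂P ≤ Real.exp (-(3/8) * (μ/b)) := by
  have hb : 0 < b := lt_of_lt_of_le hμ hμb
  have hcoef : (0:ℝ) ≤ 1 - Real.exp (-(2⁻¹:ℝ)) := by
    have := aux_exp_half; linarith
  -- pointwise convexity bound
  have hpt : ∀ᵐ ω ∂P, Real.exp (-(2*b)⁻¹ * X ω)
      ≤ 1 - (1 - Real.exp (-(2⁻¹:ℝ))) * (X ω / b) := by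
    filter_upwards [hbdd] with ω ⟨h0, h1⟩
    have hθ0 : 0 ≤ X ω / b := div_nonneg h0 hb.le
    have hθ1 : X ω / b ≤ 1 := (div_le_one hb).mpr h1
    have hconv := convexOn_exp.2 (Set.mem_univ (0:ℝ)) (Set.mem_univ (-(2⁻¹:ℝ)))
      (by linarith : (0:ℝ) ≤ 1 - X ω / b) hθ0 (by ring)
    have harg : (1 - X ω / b) • (0:ℝ) + (X ω / b) • (-(2⁻¹:ℝ)) = -(2*b)⁻¹ * X ω := by
      simp only [smul_eq_mul, mul_zero, zero_add, mul_inv, div_eq_mul_inv]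
      ring
    rw [harg] at hconv
    simp only [smul_eq_mul, Real.exp_zero, mul_one] at hconv
    calc Real.exp (-(2*b)⁻¹ * X ω) ≤ (1 - X ω / b) * 1 + (X ω / b) * Real.exp (-(2⁻¹:ℝ)) := by
          simpa using hconv
      _ = 1 - (1 - Real.exp (-(2⁻¹:ℝ))) * (X ω / b) := by ring
  -- integrability
  have hXint : Integrable X P := by
    refine Integrable.mono' (integrable_const b) hX.aestronglyMeasurable ?_
    filter_upwards [hbdd] with ω ⟨h0, h1⟩
    rw [Real.norm_eq_abs, abs_of_nonneg h0]; exact h1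
  have hexpint : Integrable (fun ω => Real.exp (-(2*b)⁻¹ * X ω)) P := by
    refine Integrable.mono' (integrable_const 1) (Real.measurable_exp.comp (hX.const_mul _)).aestronglyMeasurable ?_
    filter_upwards [hbdd] with ω ⟨h0, h1⟩
    rw [Real.norm_eq_abs, abs_of_nonneg (Real.exp_nonneg _)]
    rw [← Real.exp_zero]
    apply Real.exp_le_exp.mpr
    have : (0:ℝ) ≤ (2*b)⁻¹ * X ω := by positivity
    linarith
  have hint : ∫ ω, Real.exp (-(2*b)⁻¹ * X ω) ∂P
      ≤ ∫ ω, (1 - (1 - Real.exp (-(2⁻¹:ℝ))) * (X ω / b)) ∂P := by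
    refine integral_mono_ae hexpint ?_ hpt
    exact (integrable_const 1).sub ((hXint.div_const b).const_mul _)
  have heval : ∫ ω, (1 - (1 - Real.exp (-(2⁻¹:ℝ))) * (X ω / b)) ∂P
      = 1 - (1 - Real.exp (-(2⁻¹:ℝ))) / b * ∫ ω, X ω ∂P := by
    rw [integral_sub (integrable_const 1) ((hXint.div_const b).const_mul _)]
    rw [integral_const]
    simp only [measure_univ, probReal_univ, ENNReal.toReal_one, smul_eq_mul, one_mul]
    rw [integral_const_mul, integral_div]
    ring
  have hmono : 1 - (1 - Real.exp (-(2⁻¹:ℝ))) / b * ∫ ω, X ω ∂P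
      ≤ 1 - (3/8) * (μ/b) := by
    have h58 := aux_exp_half
    have hc : (3/8 : ℝ) ≤ 1 - Real.exp (-(2⁻¹:ℝ)) := by linarith
    have h1 : (1 - Real.exp (-(2⁻¹:ℝ))) / b * μ ≤ (1 - Real.exp (-(2⁻¹:ℝ))) / b * ∫ ω, X ω ∂P := by
      apply mul_le_mul_of_nonneg_left hmean (by positivity)
    have h2 : (3/8) * (μ/b) ≤ (1 - Real.exp (-(2⁻¹:ℝ))) / b * μ := by
      have hmb : (0:ℝ) ≤ μ / b := by positivity
      have := mul_le_mul_of_nonneg_right hc hmb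
      calc (3/8 : ℝ) * (μ/b) ≤ (1 - Real.exp (-(2⁻¹:ℝ))) * (μ/b) := this
        _ = (1 - Real.exp (-(2⁻¹:ℝ))) / b * μ := by rw [div_eq_mul_inv, div_eq_mul_inv]; ring
    linarith
  have hfinal : 1 - (3/8) * (μ/b) ≤ Real.exp (-(3/8) * (μ/b)) := by
    have := Real.add_one_le_exp (-(3/8) * (μ/b))
    linarith
  linarith

/-- Chernoff bound for the sum. -/
lemma aux_chernoff {Ω : Type*} [MeasurableSpace Ω] (P : Measure Ω) [IsProbabilityMeasure P]
    (μ b : ℝ) (hμ : 0 < μ) (hμb : μ ≤ b)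
    (X : ℕ → Ω → ℝ) (hmeas : ∀ j, Measurable (X j))
    (hindep : iIndepFun X P)
    (hbdd : ∀ j, ∀ᵐ ω ∂P, 0 ≤ X j ω ∧ X j ω ≤ b)
    (hmean : ∀ j, μ ≤ ∫ ω, X j ω ∂P) (N : ℕ) :
    (P {ω | (∑ j ∈ Finset.range N, X j ω) ≤ N * μ / 2}).toReal
      ≤ Real.exp (-(N : ℝ) * (μ / (8 * b))) := by
  have hb : 0 < b := lt_of_lt_of_le hμ hμb
  set t : ℝ := -(2*b)⁻¹ with ht_def
  have ht : t ≤ 0 := neg_nonpos.mpr (by positivity)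
  have hexpint : ∀ (S : Finset ℕ), Integrable (fun ω => Real.exp (t * (∑ j ∈ S, X j ω))) P := by
    intro S
    refine Integrable.mono' (integrable_const 1)
      (Real.measurable_exp.comp ((Finset.measurable_sum S (fun j _ => hmeas j)).const_mul t)).aestronglyMeasurable ?_
    have hball : ∀ᵐ ω ∂P, ∀ j ∈ S, 0 ≤ X j ω ∧ X j ω ≤ b :=
      (ae_ball_iff S.countable_toSet).mpr (fun j _ => hbdd j)
    filter_upwards [hball] with ω hω
    rw [Real.norm_eq_abs, abs_of_nonneg (Real.exp_nonneg _), ← Real.exp_zero]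
    apply Real.exp_le_exp.mpr
    have hS0 : 0 ≤ ∑ j ∈ S, X j ω := Finset.sum_nonneg (fun j hj => (hω j hj).1)
    have : t * (∑ j ∈ S, X j ω) ≤ 0 := mul_nonpos_of_nonpos_of_nonneg ht hS0
    exact this
  have hcher := measure_le_le_exp_mul_mgf (X := fun ω => ∑ j ∈ Finset.range N, X j ω)
    (μ := P) (t := t) ((N : ℝ) * μ / 2) ht ?_
  swap
  · simpa using hexpint (Finset.range N)
  have hsum_eq : (fun ω => ∑ j ∈ Finset.range N, X j ω) = ∑ j ∈ Finset.range N, X j := by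
    ext ω; simp
  have hmgf_sum : mgf (fun ω => ∑ j ∈ Finset.range N, X j ω) P t
      = ∏ j ∈ Finset.range N, mgf (X j) P t := by
    rw [hsum_eq]
    exact hindep.mgf_sum (fun i => hmeas i) (Finset.range N)
  have hone : ∀ j, mgf (X j) P t ≤ Real.exp (-(3/8) * (μ/b)) := by
    intro j
    have := aux_mgf_bound P μ b hμ hμb (X j) (hmeas j) (hbdd j) (hmean j)
    simpa [mgf, ht_def] using this
  have hprod : ∏ j ∈ Finset.range N, mgf (X j) P t
      ≤ Real.exp (-(3/8) * (μ/b)) ^ N := by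
    have := Finset.prod_le_prod (f := fun j => mgf (X j) P t)
      (fun j _ => mgf_nonneg) (fun j (_ : j ∈ Finset.range N) => hone j)
    simpa using this
  have hfin : Real.exp (-t * ((N:ℝ) * μ / 2)) * Real.exp (-(3/8) * (μ/b)) ^ N
      = Real.exp (-(N : ℝ) * (μ / (8 * b))) := by
    rw [← Real.exp_nat_mul, ← Real.exp_add]
    congr 1
    rw [ht_def]
    field_simp
    ring
  calc (P {ω | (∑ j ∈ Finset.range N, X j ω) ≤ N * μ / 2}).toReal
      ≤ Real.exp (-t * ((N:ℝ) * μ / 2)) * mgf (fun ω => ∑ j ∈ Finset.range N, X j ω) P t := by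
        exact hcher
    _ ≤ Real.exp (-t * ((N:ℝ) * μ / 2)) * Real.exp (-(3/8) * (μ/b)) ^ N := by
        apply mul_le_mul_of_nonneg_left _ (Real.exp_nonneg _)
        rw [hmgf_sum]; exact hprod
    _ = Real.exp (-(N : ℝ) * (μ / (8 * b))) := hfin

/-- For independent random variables `X_j` bounded in `[0, b]` a.s. with
means at least `μ > 0`, the expectation `E[N^k/(∑_{j<N} X_j + N₀)^k]` is bounded between
two positive constants, uniformly in `N ≥ 1`. -/
theorem scaled_inv_pow_sum_expectation_bounded
    {Ω : Type*} [MeasurableSpace Ω] (P : Measure Ω) [IsProbabilityMeasure P]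
    (k : ℕ) (hk : 1 ≤ k) (N₀ : ℝ) (hN₀ : 0 < N₀)
    (μ b : ℝ) (hμ : 0 < μ) (hμb : μ ≤ b)
    (X : ℕ → Ω → ℝ) (hmeas : ∀ j, Measurable (X j))
    (hindep : iIndepFun X P)
    (hbdd : ∀ j, ∀ᵐ ω ∂P, 0 ≤ X j ω ∧ X j ω ≤ b)
    (hmean : ∀ j, μ ≤ ∫ ω, X j ω ∂P) :
    ∃ c₁ > (0 : ℝ), ∃ c₂ > (0 : ℝ), ∀ N : ℕ, 1 ≤ N →
      c₁ ≤ (∫ ω, (N : ℝ) ^ k / (∑ j ∈ Finset.range N, X j ω + N₀) ^ k ∂P) ∧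
      (∫ ω, (N : ℝ) ^ k / (∑ j ∈ Finset.range N, X j ω + N₀) ^ k ∂P) ≤ c₂ := by
  have hb : 0 < b := lt_of_lt_of_le hμ hμb
  set c : ℝ := μ / (8 * b) with hc_def
  have hc : 0 < c := by positivity
  refine ⟨((b + N₀) ^ k)⁻¹, by positivity,
    (2 / μ) ^ k + (k.factorial : ℝ) * (8 * b / μ) ^ k / N₀ ^ k, by positivity, ?_⟩
  intro N hN
  have hN1 : (1 : ℝ) ≤ (N : ℝ) := by exact_mod_cast hN
  have hNpos : (0 : ℝ) < (N : ℝ) := by linarith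
  set S : Ω → ℝ := fun ω => ∑ j ∈ Finset.range N, X j ω with hS_def
  have hSmeas : Measurable S := Finset.measurable_sum _ (fun j _ => hmeas j)
  have hball : ∀ᵐ ω ∂P, ∀ j ∈ Finset.range N, 0 ≤ X j ω ∧ X j ω ≤ b :=
    (ae_ball_iff (Finset.range N).countable_toSet).mpr (fun j _ => hbdd j)
  have hSbd : ∀ᵐ ω ∂P, 0 ≤ S ω ∧ S ω ≤ (N : ℝ) * b := by
    filter_upwards [hball] with ω hω
    refine ⟨Finset.sum_nonneg fun j hj => (hω j hj).1, ?_⟩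
    calc S ω ≤ ∑ _j ∈ Finset.range N, b := Finset.sum_le_sum fun j hj => (hω j hj).2
      _ = (N : ℝ) * b := by simp [mul_comm]
  set f : Ω → ℝ := fun ω => (N : ℝ) ^ k / (S ω + N₀) ^ k with hf_def
  have hfmeas : Measurable f := measurable_const.div ((hSmeas.add_const N₀).pow_const k)
  -- pointwise bounds given 0 ≤ S ω ≤ N b
  have hpt : ∀ᵐ ω ∂P, 0 ≤ f ω ∧ f ω ≤ ((N : ℝ) / N₀) ^ k ∧ ((b + N₀) ^ k)⁻¹ ≤ f ω := by
    filter_upwards [hSbd] with ω ⟨h0, h1⟩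
    have hden : 0 < S ω + N₀ := by linarith
    refine ⟨by positivity, ?_, ?_⟩
    · have h2 : N₀ ^ k ≤ (S ω + N₀) ^ k := pow_le_pow_left₀ hN₀.le (by linarith) k
      calc f ω ≤ (N : ℝ) ^ k / N₀ ^ k :=
            div_le_div_of_nonneg_left (by positivity) (by positivity) h2
        _ = ((N : ℝ) / N₀) ^ k := (div_pow _ _ _).symm
    · have h3 : S ω + N₀ ≤ (N : ℝ) * (b + N₀) := by nlinarith
      have h4 : (S ω + N₀) ^ k ≤ ((N : ℝ) * (b + N₀)) ^ k := pow_le_pow_left₀ hden.le h3 k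
      have h5 : (N : ℝ) ^ k / ((N : ℝ) * (b + N₀)) ^ k ≤ f ω :=
        div_le_div_of_nonneg_left (by positivity) (by positivity) h4
      calc ((b + N₀) ^ k)⁻¹ = (N : ℝ) ^ k / ((N : ℝ) * (b + N₀)) ^ k := by
            rw [mul_pow]
            rw [eq_div_iff (by positivity)]
            field_simp
        _ ≤ f ω := h5
  have hfint : Integrable f P := by
    refine Integrable.mono' (integrable_const (((N : ℝ) / N₀) ^ k)) hfmeas.aestronglyMeasurable ?_
    filter_upwards [hpt] with ω ⟨h0, h1, _⟩
    rw [Real.norm_eq_abs, abs_of_nonneg h0]; exact h1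
  constructor
  · -- lower bound
    have := integral_mono_ae (integrable_const (((b + N₀) ^ k)⁻¹)) hfint
      (by filter_upwards [hpt] with ω h using h.2.2)
    simpa using this
  · -- upper bound
    set E : Set Ω := {ω | S ω ≤ (N : ℝ) * μ / 2} with hE_def
    have hE : MeasurableSet E := measurableSet_le hSmeas measurable_const
    set g : Ω → ℝ := fun ω => (2 / μ) ^ k + E.indicator (fun _ => ((N : ℝ) / N₀) ^ k) ω
      with hg_def
    have hgint : Integrable g P :=
      (integrable_const _).add ((integrable_const _).indicator hE)
    have hfg : ∀ᵐ ω ∂P, f ω ≤ g ω := by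
      filter_upwards [hpt, hSbd] with ω ⟨h0, h1, _⟩ ⟨hs0, _⟩
      by_cases hω : ω ∈ E
      · rw [hg_def]
        simp only [Set.indicator_of_mem hω]
        have : (0:ℝ) ≤ (2 / μ) ^ k := by positivity
        linarith
      · rw [hg_def]
        simp only [Set.indicator_of_notMem hω, add_zero]
        have hgt : (N : ℝ) * μ / 2 < S ω := not_le.mp hω
        have hden : (N : ℝ) * μ / 2 ≤ S ω + N₀ := by linarith
        have h4 : ((N : ℝ) * μ / 2) ^ k ≤ (S ω + N₀) ^ k :=
          pow_le_pow_left₀ (by positivity) hden k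
        have h5 : f ω ≤ (N : ℝ) ^ k / ((N : ℝ) * μ / 2) ^ k :=
          div_le_div_of_nonneg_left (by positivity) (by positivity) h4
        calc f ω ≤ (N : ℝ) ^ k / ((N : ℝ) * μ / 2) ^ k := h5
          _ = ((N : ℝ) / ((N : ℝ) * μ / 2)) ^ k := (div_pow _ _ _).symm
          _ = (2 / μ) ^ k := by
            congr 1
            rw [div_eq_div_iff (by positivity) (by positivity)]
            ring
    have hint_g : ∫ ω, g ω ∂P
        = (2 / μ) ^ k + (P E).toReal * ((N : ℝ) / N₀) ^ k := by
      rw [hg_def]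
      rw [integral_add (integrable_const _) ((integrable_const _).indicator hE)]
      rw [integral_const, integral_indicator_const _ hE]
      simp [smul_eq_mul, measureReal_def]
    have hP : (P E).toReal ≤ Real.exp (-(N : ℝ) * c) :=
      aux_chernoff P μ b hμ hμb X hmeas hindep hbdd hmean N
    have hkey : (N : ℝ) ^ k * Real.exp (-(N : ℝ) * c) ≤ (k.factorial : ℝ) * (8 * b / μ) ^ k := by
      have h6 := Real.pow_div_factorial_le_exp (x := (N : ℝ) * c) (by positivity) k
      have h7 : ((N : ℝ) * c) ^ k ≤ (k.factorial : ℝ) * Real.exp ((N : ℝ) * c) := by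
        rw [div_le_iff₀ (by positivity)] at h6
        linarith [h6]
      have h8 : (N : ℝ) ^ k * c ^ k ≤ (k.factorial : ℝ) * Real.exp ((N : ℝ) * c) := by
        rw [← mul_pow]; exact h7
      have hcinv : (8 * b / μ) ^ k = (c ^ k)⁻¹ := by
        rw [hc_def, ← inv_pow]
        congr 1
        rw [inv_div]
      rw [hcinv, neg_mul, Real.exp_neg, ← div_eq_mul_inv, ← div_eq_mul_inv]
      rw [div_le_div_iff₀ (Real.exp_pos _) (by positivity)]
      exact h8
    have hterm : (P E).toReal * ((N : ℝ) / N₀) ^ k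
        ≤ (k.factorial : ℝ) * (8 * b / μ) ^ k / N₀ ^ k := by
      have h9 : (P E).toReal * ((N : ℝ) / N₀) ^ k
          ≤ Real.exp (-(N : ℝ) * c) * ((N : ℝ) / N₀) ^ k :=
        mul_le_mul_of_nonneg_right hP (by positivity)
      calc (P E).toReal * ((N : ℝ) / N₀) ^ k
          ≤ Real.exp (-(N : ℝ) * c) * ((N : ℝ) / N₀) ^ k := h9
        _ = ((N : ℝ) ^ k * Real.exp (-(N : ℝ) * c)) / N₀ ^ k := by
            rw [div_pow]; ring
        _ ≤ (k.factorial : ℝ) * (8 * b / μ) ^ k / N₀ ^ k :=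
            div_le_div_of_nonneg_right hkey (by positivity) |>.trans_eq rfl
    calc ∫ ω, (N : ℝ) ^ k / (∑ j ∈ Finset.range N, X j ω + N₀) ^ k ∂P
        = ∫ ω, f ω ∂P := rfl
      _ ≤ ∫ ω, g ω ∂P := integral_mono_ae hfint hgint hfg
      _ = (2 / μ) ^ k + (P E).toReal * ((N : ℝ) / N₀) ^ k := hint_g
      _ ≤ (2 / μ) ^ k + (k.factorial : ℝ) * (8 * b / μ) ^ k / N₀ ^ k := by linarith
end

section
/- Let X be a finite nonempty set, let s : X → ℝ, and let Z be a nonempty compact subset of ℝ^X such that every z ∈ Z satisfies z(x) ≥ 0 for all x and Σ_{x∈X} z(x) = 1. For k ≥ 1 define the linear functional l^k(z) = Σ_{x∈X} (−1)^{k+1} s(x)^k · z(x), set S^0 = Z and S^k = { z ∈ S^{k−1} : l^k(z) ≥ l^k(w) for all w ∈ S^{k−1} }, and let M be the number of distinct values of s on X. Then the set S = ∩_{k=1}^∞ S^k is nonempty, and S = S^M. -/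
open Finset

/-- The `k`-th sensitivity functional `l^k(z) = ∑_x (−1)^{k+1} s(x)^k z(x)`. -/
noncomputable def sensFun {X : Type*} [Fintype X] (s : X → ℝ) (k : ℕ) (z : X → ℝ) : ℝ :=
  ∑ x, (-1 : ℝ) ^ (k + 1) * s x ^ k * z x

/-- The iterated sets of `k`-th sensitive policies: `S^0 = Z` and `S^k` is the set of
maximizers of `l^k` over `S^{k−1}`. -/
def sensSet {X : Type*} [Fintype X] (s : X → ℝ) (Z : Set (X → ℝ)) : ℕ → Set (X → ℝ)
  | 0 => Z
  | k + 1 => {z ∈ sensSet s Z k | ∀ w ∈ sensSet s Z k, sensFun s (k + 1) w ≤ sensFun s (k + 1) z}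

private lemma sensFun_continuous {X : Type*} [Fintype X] (s : X → ℝ) (k : ℕ) :
    Continuous (sensFun s k) := by
  unfold sensFun
  exact continuous_finset_sum _ fun x _ => continuous_const.mul (continuous_apply x)

/-- For a nonempty compact set `Z` of probability vectors on a finite set `X`,
the set of infinitely sensitive policies `S = ∩_{k≥1} S^k` is nonempty and moreover
equals `S^M`, where `M` is the number of distinct values of `s`. -/
theorem infinitely_sensitive_set_nonempty_eq_M
    {X : Type*} [Fintype X] [Nonempty X]
    (s : X → ℝ) (Z : Set (X → ℝ)) (hZne : Z.Nonempty) (hZcomp : IsCompact Z)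
    (hZprob : ∀ z ∈ Z, (∀ x, 0 ≤ z x) ∧ ∑ x, z x = 1)
    (M : ℕ) (hM : M = (Finset.univ.image s).card) :
    (⋂ k : ℕ, sensSet s Z (k + 1)).Nonempty ∧
      (⋂ k : ℕ, sensSet s Z (k + 1)) = sensSet s Z M := by
  have hMpos : 0 < M := by
    rw [hM]
    exact Finset.card_pos.2 ((univ_nonempty).image s)
  -- step inclusion and chain
  have hsub : ∀ k, sensSet s Z (k + 1) ⊆ sensSet s Z k := fun k z hz => hz.1
  have hchain : ∀ j k, j ≤ k → sensSet s Z k ⊆ sensSet s Z j := by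
    intro j k hjk
    induction k with
    | zero => simpa [Nat.le_zero.1 hjk]
    | succ k ih =>
      rcases Nat.lt_or_ge j (k + 1) with h | h
      · exact (ih (Nat.lt_succ_iff.1 h)).trans' (hsub k)
      · have : j = k + 1 := le_antisymm hjk h
        simp [this]
  have hsubZ : ∀ k, sensSet s Z k ⊆ Z := fun k => hchain 0 k (Nat.zero_le k)
  -- compactness and nonemptiness
  have hcn : ∀ k, IsCompact (sensSet s Z k) ∧ (sensSet s Z k).Nonempty := by
    intro k
    induction k with
    | zero => exact ⟨hZcomp, hZne⟩
    | succ k ih =>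
      obtain ⟨hcomp, hne⟩ := ih
      constructor
      · have hcl : IsClosed (⋂ w ∈ sensSet s Z k,
            {z : X → ℝ | sensFun s (k + 1) w ≤ sensFun s (k + 1) z}) :=
          isClosed_biInter fun w _ =>
            isClosed_le continuous_const (sensFun_continuous s (k + 1))
        have heq : sensSet s Z (k + 1) = sensSet s Z k ∩ ⋂ w ∈ sensSet s Z k,
            {z : X → ℝ | sensFun s (k + 1) w ≤ sensFun s (k + 1) z} := by
          ext z
          simp [sensSet, Set.mem_iInter]
        rw [heq]
        exact hcomp.inter_right hcl
      · obtain ⟨z, hz, hmax⟩ := hcomp.exists_isMaxOn hne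
          ((sensFun_continuous s (k + 1)).continuousOn)
        exact ⟨z, hz, fun w hw => hmax hw⟩
  -- sensFun constant on maximizer sets
  have hconst : ∀ j, ∀ z ∈ sensSet s Z (j + 1), ∀ w ∈ sensSet s Z (j + 1),
      sensFun s (j + 1) z = sensFun s (j + 1) w :=
    fun j z hz w hw => le_antisymm (hw.2 z hz.1) (hz.2 w hw.1)
  -- moments
  set m : ℕ → (X → ℝ) → ℝ := fun j z => ∑ x, s x ^ j * z x with hm
  have hsens_m : ∀ j z, sensFun s j z = (-1 : ℝ) ^ (j + 1) * m j z := by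
    intro j z
    simp only [hm, sensFun, Finset.mul_sum, mul_assoc]
  -- moments with index ≤ M are constant on S^M
  have hmomle : ∀ j ≤ M, ∀ z ∈ sensSet s Z M, ∀ w ∈ sensSet s Z M, m j z = m j w := by
    intro j hj z hz w hw
    rcases Nat.eq_zero_or_pos j with rfl | hjpos
    · have h1 := (hZprob z (hsubZ M hz)).2
      have h2 := (hZprob w (hsubZ M hw)).2
      simp only [hm, pow_zero, one_mul]
      rw [h1, h2]
    · obtain ⟨i, rfl⟩ := Nat.exists_eq_add_of_lt hjpos
      rw [zero_add] at *
      have hz' := hchain (i + 1) M hj hz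
      have hw' := hchain (i + 1) M hj hw
      have := hconst i z hz' w hw'
      rw [hsens_m, hsens_m] at this
      exact mul_left_cancel₀ (pow_ne_zero _ (by norm_num : (-1:ℝ) ≠ 0)) this
  -- all moments constant on S^M, via Lagrange interpolation
  have hmom : ∀ j, ∀ z ∈ sensSet s Z M, ∀ w ∈ sensSet s Z M, m j z = m j w := by
    intro n z hz w hw
    set T : Finset ℝ := Finset.univ.image s with hT
    have hinj : Set.InjOn id (T : Set ℝ) := Function.injective_id.injOn
    set p : Polynomial ℝ := Lagrange.interpolate T id (fun v => v ^ n) with hp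
    have hdeg : p.degree < (M : ℕ) := by
      rw [hM]; exact Lagrange.degree_interpolate_lt _ hinj
    have hndeg : p.natDegree < M := by
      rcases eq_or_ne p 0 with h | h
      · simpa [h] using hMpos
      · exact (Polynomial.natDegree_lt_iff_degree_lt h).2 (by exact_mod_cast hdeg)
    have heval : ∀ x : X, p.eval (s x) = (s x) ^ n := by
      intro x
      have hx : s x ∈ T := Finset.mem_image_of_mem s (Finset.mem_univ x)
      exact Lagrange.eval_interpolate_at_node (fun v => v ^ n) hinj hx
    have hexp : ∀ u : X → ℝ, m n u = ∑ j ∈ Finset.range M, p.coeff j * m j u := by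
      intro u
      have h1 : ∀ x : X, s x ^ n * u x
          = ∑ j ∈ Finset.range M, p.coeff j * s x ^ j * u x := by
        intro x
        rw [← heval x, Polynomial.eval_eq_sum_range' hndeg, Finset.sum_mul]
      simp only [hm, h1, Finset.mul_sum]
      rw [Finset.sum_comm]
      exact Finset.sum_congr rfl fun j _ => Finset.sum_congr rfl fun x _ => by ring
    rw [hexp z, hexp w]
    exact Finset.sum_congr rfl fun j hj =>
      congrArg _ (hmomle j (le_of_lt (Finset.mem_range.1 hj)) z hz w hw)
  -- stabilization: S^k = S^M for k ≥ M
  have hstab : ∀ k, M ≤ k → sensSet s Z k = sensSet s Z M := by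
    intro k hk
    induction k with
    | zero => simpa [Nat.le_zero.1 hk]
    | succ k ih =>
      rcases Nat.lt_or_ge M (k + 1) with h | h
      · have hkM := ih (Nat.lt_succ_iff.1 h)
        apply Set.Subset.antisymm
        · exact (hsub k).trans hkM.subset
        · intro z hz
          refine ⟨hkM.symm ▸ hz, fun w hw => ?_⟩
          have hw' : w ∈ sensSet s Z M := hkM ▸ hw
          rw [hsens_m, hsens_m, hmom (k + 1) w hw' z hz]
      · have : M = k + 1 := le_antisymm hk h
        simp [this]
  constructor
  · obtain ⟨z, hz⟩ := (hcn M).2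
    refine ⟨z, Set.mem_iInter.2 fun k => ?_⟩
    rcases Nat.lt_or_ge k M with h | h
    · exact hchain (k + 1) M h hz
    · rw [hstab (k + 1) (h.trans (Nat.le_succ k))]; exact hz
  · apply Set.Subset.antisymm
    · intro z hz
      have := Set.mem_iInter.1 hz (M - 1)
      rwa [Nat.sub_add_cancel hMpos] at this
    · intro z hz
      refine Set.mem_iInter.2 fun k => ?_
      rcases Nat.lt_or_ge k M with h | h
      · exact hchain (k + 1) M h hz
      · rw [hstab (k + 1) (h.trans (Nat.le_succ k))]; exact hz
end

section
/- Let X be a finite nonempty set, let s : X → ℝ, and let Z be a nonempty compact subset of ℝ^X such that every z ∈ Z satisfies z(x) ≥ 0 for all x and Σ_{x∈X} z(x) = 1. For k ≥ 1 define l^k(z) = Σ_{x∈X} (−1)^{k+1} s(x)^k · z(x), set S^0 = Z and S^k = { z ∈ S^{k−1} : l^k(z) ≥ l^k(w) for all w ∈ S^{k−1} }. If z and ẑ both belong to ∩_{k=1}^∞ S^k, then they induce the same pushforward distribution under s: for every real value v, Σ_{x∈X : s(x)=v} z(x) = Σ_{x∈X : s(x)=v} ẑ(x). -/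
open Finset

/-- Any two members of the set of infinitely sensitive policies
`∩_{k≥1} S^k` induce the same pushforward distribution under `s`: for every real
value `v`, the total mass they put on `{x : s(x) = v}` coincides. -/
theorem infinitely_sensitive_same_pushforward
    {X : Type*} [Fintype X] [Nonempty X]
    (s : X → ℝ) (Z : Set (X → ℝ)) (hZne : Z.Nonempty) (hZcomp : IsCompact Z)
    (hZprob : ∀ z ∈ Z, (∀ x, 0 ≤ z x) ∧ ∑ x, z x = 1)
    (z zhat : X → ℝ)
    (hz : z ∈ ⋂ k : ℕ, sensSet s Z (k + 1))
    (hzhat : zhat ∈ ⋂ k : ℕ, sensSet s Z (k + 1)) :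
    ∀ v : ℝ, ∑ x ∈ Finset.univ.filter (fun x => s x = v), z x
      = ∑ x ∈ Finset.univ.filter (fun x => s x = v), zhat x := by
  classical
  have hzk : ∀ k, z ∈ sensSet s Z k := by
    intro k
    cases k with
    | zero => exact (Set.mem_iInter.mp hz 0).1
    | succ n => exact Set.mem_iInter.mp hz n
  have hzhatk : ∀ k, zhat ∈ sensSet s Z k := by
    intro k
    cases k with
    | zero => exact (Set.mem_iInter.mp hzhat 0).1
    | succ n => exact Set.mem_iInter.mp hzhat n
  have hmom : ∀ k : ℕ, ∑ x, s x ^ k * z x = ∑ x, s x ^ k * zhat x := by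
    intro k
    cases k with
    | zero =>
      simp only [pow_zero, one_mul]
      rw [(hZprob z (hzk 0)).2, (hZprob zhat (hzhatk 0)).2]
    | succ n =>
      have h1 := (Set.mem_iInter.mp hz n).2 zhat (hzhatk n)
      have h2 := (Set.mem_iInter.mp hzhat n).2 z (hzk n)
      have heq : sensFun s (n + 1) z = sensFun s (n + 1) zhat := le_antisymm h2 h1
      have hmul : (-1 : ℝ) ^ (n + 1 + 1) * ∑ x, s x ^ (n + 1) * z x
          = (-1 : ℝ) ^ (n + 1 + 1) * ∑ x, s x ^ (n + 1) * zhat x := by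
        simpa [sensFun, Finset.mul_sum, mul_assoc] using heq
      have hne : ((-1 : ℝ) ^ (n + 1 + 1)) ≠ 0 := pow_ne_zero _ (by norm_num)
      exact mul_left_cancel₀ hne hmul
  intro v
  set T : Finset ℝ := Finset.image s Finset.univ with hT
  set p : Polynomial ℝ :=
    Lagrange.interpolate T id (fun t => if t = v then 1 else 0) with hp
  have hpeval : ∀ x : X, p.eval (s x) = if s x = v then 1 else 0 := by
    intro x
    have hx : s x ∈ T := Finset.mem_image_of_mem s (Finset.mem_univ x)
    have := Lagrange.eval_interpolate_at_node
      (r := fun t => if t = v then (1 : ℝ) else 0) (Set.injOn_id _) hx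
    simp only [id_eq] at this
    rw [hp]
    exact this
  have key : ∀ w : X → ℝ, (∑ x ∈ Finset.univ.filter (fun x => s x = v), w x)
      = ∑ k ∈ Finset.range (p.natDegree + 1), p.coeff k * ∑ x, s x ^ k * w x := by
    intro w
    rw [Finset.sum_filter]
    have h1 : ∀ x : X, (if s x = v then w x else 0) = p.eval (s x) * w x := by
      intro x; rw [hpeval x]; split <;> simp
    simp_rw [h1, Polynomial.eval_eq_sum_range, Finset.sum_mul]
    rw [Finset.sum_comm]
    simp_rw [Finset.mul_sum, mul_assoc]
  rw [key z, key zhat]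
  simp_rw [hmom]
end

section
/- Let (Ω, F, P) be a probability space, let N₀ > 0, let 0 < μ ≤ b, let A ≥ 0, and let (X_j)_{j≥1} be independent random variables with 0 ≤ X_j ≤ b almost surely and E[X_j] ≥ μ for every j. Then there exist constants c₁ > 0 and c₂ > 0 such that for all N ≥ 1 and all a with 0 ≤ a ≤ A, c₁ · a ≤ E[ N · log₂(1 + a/(Σ_{j=1}^N X_j + N₀)) ] ≤ c₂ · a. -/
open MeasureTheory ProbabilityTheory

/-- Pointwise lower bound for the scaled log. -/
lemma aux_log_lower (N₀ μ b A : ℝ) (hN₀ : 0 < N₀) (hμ : 0 < μ) (hμb : μ ≤ b)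
    (hA : 0 ≤ A) (N : ℕ) (hN : 1 ≤ N) (a : ℝ) (ha : 0 ≤ a) (haA : a ≤ A)
    (s : ℝ) (hs1 : N₀ ≤ s) (hs2 : s ≤ N * b + N₀) :
    ((b + N₀ + A) * Real.log 2)⁻¹ * a ≤ (N : ℝ) * Real.logb 2 (1 + a / s) := by
  have hb : 0 < b := lt_of_lt_of_le hμ hμb
  have hs : 0 < s := lt_of_lt_of_le hN₀ hs1
  have hln2 : 0 < Real.log 2 := Real.log_pos (by norm_num)
  have hx : 0 ≤ a / s := div_nonneg ha hs.le
  have hNpos : (0 : ℝ) < N := by exact_mod_cast hN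
  have hden : 0 < b + N₀ + A := by linarith
  have hsa : 0 < s + a := by linarith
  -- log (1+x) ≥ x/(1+x)
  have hlog : a / (s + a) ≤ Real.log (1 + a / s) := by
    have h1x : 0 < 1 + a / s := by linarith
    have h := Real.one_sub_inv_le_log_of_pos h1x
    have heq : 1 - (1 + a / s)⁻¹ = a / (s + a) := by
      rw [sub_eq_iff_eq_add]
      field_simp
      ring
    linarith [heq ▸ h]
  suffices hkey : a / (b + N₀ + A) ≤ (N : ℝ) * Real.log (1 + a / s) by
    calc ((b + N₀ + A) * Real.log 2)⁻¹ * a = (a / (b + N₀ + A)) / Real.log 2 := by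
          rw [mul_inv]; ring
      _ ≤ ((N : ℝ) * Real.log (1 + a / s)) / Real.log 2 := by gcongr
      _ = (N : ℝ) * Real.logb 2 (1 + a / s) := by rw [Real.logb]; ring
  have k1 : a / (b + N₀ + A) ≤ (N : ℝ) * a / (s + a) := by
    rw [div_le_div_iff₀ hden hsa]
    have h1N : (1 : ℝ) ≤ N := by exact_mod_cast hN
    nlinarith [mul_le_mul_of_nonneg_left hs2 ha, mul_le_mul_of_nonneg_left haA ha,
      mul_nonneg (mul_nonneg ha hN₀.le) (sub_nonneg.2 h1N),
      mul_nonneg (mul_nonneg ha hA) (sub_nonneg.2 h1N)]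
  calc a / (b + N₀ + A) ≤ (N : ℝ) * a / (s + a) := k1
    _ = (N : ℝ) * (a / (s + a)) := by ring
    _ ≤ (N : ℝ) * Real.log (1 + a / s) :=
        mul_le_mul_of_nonneg_left hlog (Nat.cast_nonneg N)

/-- Pointwise upper bound: `N logb 2 (1+a/s) ≤ N a / (s log 2)` for `s > 0`, `a ≥ 0`. -/
lemma aux_log_upper (N : ℕ) (a s : ℝ) (ha : 0 ≤ a) (hs : 0 < s) :
    (N : ℝ) * Real.logb 2 (1 + a / s) ≤ (N : ℝ) * a / (s * Real.log 2) := by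
  have hln2 : 0 < Real.log 2 := Real.log_pos (by norm_num)
  have hx : 0 ≤ a / s := div_nonneg ha hs.le
  have hlog : Real.log (1 + a / s) ≤ a / s := by
    have := Real.log_le_sub_one_of_pos (by linarith : (0:ℝ) < 1 + a / s)
    linarith
  have : Real.logb 2 (1 + a / s) ≤ a / s / Real.log 2 := by
    rw [Real.logb, div_le_div_iff₀ hln2 hln2]
    exact mul_le_mul_of_nonneg_right hlog hln2.le
  calc (N : ℝ) * Real.logb 2 (1 + a / s) ≤ (N : ℝ) * (a / s / Real.log 2) :=
        mul_le_mul_of_nonneg_left this (Nat.cast_nonneg N)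
    _ = (N : ℝ) * a / (s * Real.log 2) := by field_simp

/-- For independent random variables `X_j` bounded in `[0, b]` a.s. with
means at least `μ > 0`, the expectation `E[N · log₂(1 + a/(∑_{j<N} X_j + N₀))]` is bounded
between `c₁·a` and `c₂·a`, uniformly in `N ≥ 1` and `0 ≤ a ≤ A`. -/
theorem expected_scaled_log_rate_linear_bounds
    {Ω : Type*} [MeasurableSpace Ω] (P : Measure Ω) [IsProbabilityMeasure P]
    (N₀ : ℝ) (hN₀ : 0 < N₀) (μ b : ℝ) (hμ : 0 < μ) (hμb : μ ≤ b)
    (A : ℝ) (hA : 0 ≤ A)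
    (X : ℕ → Ω → ℝ) (hmeas : ∀ j, Measurable (X j))
    (hindep : iIndepFun X P)
    (hbdd : ∀ j, ∀ᵐ ω ∂P, 0 ≤ X j ω ∧ X j ω ≤ b)
    (hmean : ∀ j, μ ≤ ∫ ω, X j ω ∂P) :
    ∃ c₁ > (0 : ℝ), ∃ c₂ > (0 : ℝ), ∀ N : ℕ, 1 ≤ N → ∀ a : ℝ, 0 ≤ a → a ≤ A →
      c₁ * a ≤ (∫ ω, (N : ℝ) *
          Real.logb 2 (1 + a / (∑ j ∈ Finset.range N, X j ω + N₀)) ∂P) ∧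
      (∫ ω, (N : ℝ) *
          Real.logb 2 (1 + a / (∑ j ∈ Finset.range N, X j ω + N₀)) ∂P) ≤ c₂ * a := by
  have hb : 0 < b := lt_of_lt_of_le hμ hμb
  have hln2 : 0 < Real.log 2 := Real.log_pos (by norm_num)
  have hden : 0 < b + N₀ + A := by linarith
  refine ⟨((b + N₀ + A) * Real.log 2)⁻¹, by positivity,
    (2 / μ + 4 * b ^ 2 / (N₀ * μ ^ 2)) / Real.log 2, by positivity, ?_⟩
  intro N hN a ha haA
  have hNpos : (0 : ℝ) < N := by exact_mod_cast hN
  -- a.e. bounds on the sum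
  have hae : ∀ᵐ ω ∂P, ∀ j, 0 ≤ X j ω ∧ X j ω ≤ b := ae_all_iff.2 hbdd
  -- the sum function
  set T : Ω → ℝ := fun ω => ∑ j ∈ Finset.range N, X j ω with hT
  have hTmeas : Measurable T := Finset.measurable_sum _ fun j _ => hmeas j
  have hTae : ∀ᵐ ω ∂P, 0 ≤ T ω ∧ T ω ≤ N * b := by
    filter_upwards [hae] with ω hω
    constructor
    · exact Finset.sum_nonneg fun j _ => (hω j).1
    · calc T ω ≤ ∑ _j ∈ Finset.range N, b := Finset.sum_le_sum fun j _ => (hω j).2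
        _ = N * b := by simp [mul_comm]
  -- measurability of the integrand
  set f : Ω → ℝ := fun ω => (N : ℝ) * Real.logb 2 (1 + a / (T ω + N₀)) with hf
  have hfmeas : Measurable f := by
    have : Measurable fun ω => Real.log (1 + a / (T ω + N₀)) :=
      Real.measurable_log.comp (((hTmeas.add_const N₀).const_div a).const_add 1)
    exact measurable_const.mul (this.div_const (Real.log 2))
  -- integrability of the integrand
  have hfint : Integrable f P := by
    refine Integrable.mono' (integrable_const ((N : ℝ) * Real.logb 2 (1 + a / N₀)))
      hfmeas.aestronglyMeasurable ?_
    filter_upwards [hTae] with ω hω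
    have hS : N₀ ≤ T ω + N₀ := by linarith [hω.1]
    have hSpos : 0 < T ω + N₀ := lt_of_lt_of_le hN₀ hS
    have hxpos : 0 ≤ a / (T ω + N₀) := div_nonneg ha hSpos.le
    have h1 : 0 ≤ f ω := by
      apply mul_nonneg (Nat.cast_nonneg N)
      apply Real.logb_nonneg (by norm_num)
      linarith
    have h2 : f ω ≤ (N : ℝ) * Real.logb 2 (1 + a / N₀) := by
      apply mul_le_mul_of_nonneg_left _ (Nat.cast_nonneg N)
      have hq : a / (T ω + N₀) ≤ a / N₀ := by
        gcongr
      exact Real.logb_le_logb_of_le (by norm_num) (by linarith) (by linarith)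
    rw [Real.norm_eq_abs, abs_of_nonneg h1]
    exact h2
  constructor
  · -- lower bound
    have hle : ∀ᵐ ω ∂P, ((b + N₀ + A) * Real.log 2)⁻¹ * a ≤ f ω := by
      filter_upwards [hTae] with ω hω
      exact aux_log_lower N₀ μ b A hN₀ hμ hμb hA N hN a ha haA (T ω + N₀)
        (by linarith [hω.1]) (by linarith [hω.2])
    calc ((b + N₀ + A) * Real.log 2)⁻¹ * a
        = ∫ _ω, ((b + N₀ + A) * Real.log 2)⁻¹ * a ∂P := by simp
      _ ≤ ∫ ω, f ω ∂P := integral_mono_ae (integrable_const _) hfint hle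
  · -- upper bound
    -- the bad event
    set E : Set Ω := {ω | T ω < N * μ / 2} with hE
    have hEmeas : MeasurableSet E := measurableSet_lt hTmeas measurable_const
    -- L² bounds
    have hL2 : ∀ j, MemLp (X j) 2 P := by
      intro j
      refine MemLp.of_bound (hmeas j).aestronglyMeasurable b ?_
      filter_upwards [hbdd j] with ω hω
      rw [Real.norm_eq_abs, abs_le]
      exact ⟨by linarith [hω.1], hω.2⟩
    -- variance bound for each X j
    have hvar : ∀ j, variance (X j) P ≤ b ^ 2 := by
      intro j
      refine le_trans (variance_le_expectation_sq (hmeas j).aestronglyMeasurable) ?_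
      have : ∫ ω, (X j ω) ^ 2 ∂P ≤ ∫ _ω, b ^ 2 ∂P := by
        refine integral_mono_ae ((hL2 j).integrable_sq) (integrable_const _) ?_
        filter_upwards [hbdd j] with ω hω
        nlinarith [hω.1, hω.2]
      simpa using this
    -- MemLp of T (as function sum)
    have hTfun : T = ∑ j ∈ Finset.range N, X j := by
      funext ω; simp [hT]
    have hTL2 : MemLp T 2 P := by
      rw [hTfun]; exact memLp_finset_sum' _ fun j _ => hL2 j
    -- variance of T
    have hvarT : variance T P ≤ N * b ^ 2 := by
      rw [hTfun, IndepFun.variance_sum (fun j _ => hL2 j)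
        (fun i _ j _ hij => hindep.indepFun hij)]
      calc ∑ j ∈ Finset.range N, variance (X j) P ≤ ∑ _j ∈ Finset.range N, b ^ 2 :=
            Finset.sum_le_sum fun j _ => hvar j
        _ = N * b ^ 2 := by simp [mul_comm]
    -- mean of T
    have hmeanT : N * μ ≤ ∫ ω, T ω ∂P := by
      have : ∫ ω, T ω ∂P = ∑ j ∈ Finset.range N, ∫ ω, X j ω ∂P := by
        rw [hT]
        exact integral_finset_sum _ fun j _ => (hL2 j).integrable one_le_two
      rw [this]
      calc (N : ℝ) * μ = ∑ _j ∈ Finset.range N, μ := by simp [mul_comm]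
        _ ≤ _ := Finset.sum_le_sum fun j _ => hmean j
    -- Chebyshev
    have hcheb : (P E).toReal ≤ 4 * b ^ 2 / (N * μ ^ 2) := by
      have hsub : E ⊆ {ω | N * μ / 2 ≤ |T ω - P[T]|} := by
        intro ω hω
        simp only [hE, Set.mem_setOf_eq] at hω ⊢
        rw [le_abs]
        right
        have : (N : ℝ) * μ ≤ P[T] := hmeanT
        linarith
      have hc : 0 < (N : ℝ) * μ / 2 := by positivity
      have h1 : P E ≤ ENNReal.ofReal (variance T P / ((N : ℝ) * μ / 2) ^ 2) :=
        le_trans (measure_mono hsub) (meas_ge_le_variance_div_sq hTL2 hc)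
      have h2 : variance T P / ((N : ℝ) * μ / 2) ^ 2 ≤ 4 * b ^ 2 / (N * μ ^ 2) := by
        rw [div_le_div_iff₀ (by positivity) (by positivity)]
        have := variance_nonneg T P
        nlinarith [mul_le_mul_of_nonneg_right hvarT (by positivity : (0:ℝ) ≤ N * μ ^ 2)]
      calc (P E).toReal ≤ (ENNReal.ofReal (variance T P / ((N : ℝ) * μ / 2) ^ 2)).toReal :=
            ENNReal.toReal_mono ENNReal.ofReal_ne_top h1
        _ = variance T P / ((N : ℝ) * μ / 2) ^ 2 :=
            ENNReal.toReal_ofReal (div_nonneg (variance_nonneg T P) (by positivity))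
        _ ≤ _ := h2
    -- the dominating function
    set g : Ω → ℝ := fun ω => 2 * a / (μ * Real.log 2) +
      E.indicator (fun _ => (N : ℝ) * a / (N₀ * Real.log 2)) ω with hg
    have hgint : Integrable g P :=
      (integrable_const _).add ((integrable_const _).indicator hEmeas)
    have hfg : ∀ᵐ ω ∂P, f ω ≤ g ω := by
      filter_upwards [hTae] with ω hω
      have hS : N₀ ≤ T ω + N₀ := by linarith [hω.1]
      have hSpos : 0 < T ω + N₀ := lt_of_lt_of_le hN₀ hS
      have hf_up : f ω ≤ (N : ℝ) * a / ((T ω + N₀) * Real.log 2) :=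
        aux_log_upper N a (T ω + N₀) ha hSpos
      by_cases hmem : ω ∈ E
      · have hind : E.indicator (fun _ => (N : ℝ) * a / (N₀ * Real.log 2)) ω
            = (N : ℝ) * a / (N₀ * Real.log 2) := Set.indicator_of_mem hmem _
        have : (N : ℝ) * a / ((T ω + N₀) * Real.log 2) ≤ (N : ℝ) * a / (N₀ * Real.log 2) := by
          apply div_le_div_of_nonneg_left (by positivity) (by positivity)
          exact mul_le_mul_of_nonneg_right hS hln2.le
        have h0 : 0 ≤ 2 * a / (μ * Real.log 2) := by positivity
        simp only [hg, hind]
        linarith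
      · have hind : E.indicator (fun _ => (N : ℝ) * a / (N₀ * Real.log 2)) ω = 0 :=
          Set.indicator_of_notMem hmem _
        have hTge : (N : ℝ) * μ / 2 ≤ T ω := by
          simp only [hE, Set.mem_setOf_eq, not_lt] at hmem
          exact hmem
        have : (N : ℝ) * a / ((T ω + N₀) * Real.log 2) ≤ 2 * a / (μ * Real.log 2) := by
          rw [div_le_div_iff₀ (by positivity) (by positivity)]
          have h1 : (N : ℝ) * μ / 2 ≤ T ω + N₀ := by linarith
          nlinarith [mul_le_mul_of_nonneg_left h1 (mul_nonneg ha hln2.le)]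
        simp only [hg, hind]
        linarith
    have hintg : ∫ ω, g ω ∂P = 2 * a / (μ * Real.log 2) +
        (N : ℝ) * a / (N₀ * Real.log 2) * (P E).toReal := by
      rw [hg, integral_add (integrable_const _) ((integrable_const _).indicator hEmeas)]
      simp [integral_indicator_const _ hEmeas, mul_comm, measureReal_def]
    have hfinal : ∫ ω, f ω ∂P ≤ 2 * a / (μ * Real.log 2) +
        (N : ℝ) * a / (N₀ * Real.log 2) * (4 * b ^ 2 / (N * μ ^ 2)) := by
      calc ∫ ω, f ω ∂P ≤ ∫ ω, g ω ∂P := integral_mono_ae hfint hgint hfg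
        _ = _ := hintg
        _ ≤ _ := by gcongr
    calc ∫ ω, f ω ∂P ≤ 2 * a / (μ * Real.log 2) +
          (N : ℝ) * a / (N₀ * Real.log 2) * (4 * b ^ 2 / (N * μ ^ 2)) := hfinal
      _ = (2 / μ + 4 * b ^ 2 / (N₀ * μ ^ 2)) / Real.log 2 * a := by
          field_simp
end

section
/- Let Q ≥ 1 be an integer, let 0 < s ≤ 1, and let F : ℕ → ℝ satisfy F(j) ≥ 0 for all j and Σ_{j=0}^∞ F(j) = 1. Consider the Markov transition matrix P on the state space {0, 1, …, Q} defined by: P(0,0) = 1 − s + s·F(0); P(0,j) = s·F(j) for 1 ≤ j ≤ Q−1; P(0,Q) = s·(1 − Σ_{j=0}^{Q−1} F(j)); P(j, j−1) = 1 for 1 ≤ j ≤ Q; and all other entries zero. Set c = Σ_{k=1}^{Q} (1 − Σ_{j=0}^{k−1} F(j)), and define π(0) = 1/(1 + s·c) and π(k) = s·π(0)·(1 − Σ_{j=0}^{k−1} F(j)) for 1 ≤ k ≤ Q. Then π is a probability vector on {0,…,Q} (all entries nonnegative and summing to 1), P is a stochastic matrix (each row nonnegative and summing to 1), and π is stationary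 for P, i.e. Σ_{q=0}^{Q} π(q)·P(q, k) = π(k) for every k ∈ {0,…,Q}. -/
open Finset

/-- Transition matrix of the queue process on states `{0, 1, …, Q}`: from state `0`,
arrivals of size `j` are accepted with probability `s` (truncated at `Q`); from a
nonempty state `j ≥ 1` the chain moves deterministically to `j − 1`. -/
noncomputable def queueP (Q : ℕ) (s : ℝ) (F : ℕ → ℝ) (i j : Fin (Q + 1)) : ℝ :=
  if (i : ℕ) = 0 then
    if (j : ℕ) = 0 then 1 - s + s * F 0
    else if (j : ℕ) = Q then s * (1 - ∑ m ∈ Finset.range Q, F m)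
    else s * F (j : ℕ)
  else if (j : ℕ) + 1 = (i : ℕ) then 1 else 0

/-- The candidate stationary distribution: `π(0) = 1/(1 + s·c)` and
`π(k) = s·π(0)·(1 − ∑_{j<k} F(j))` for `k ≥ 1`, where
`c = ∑_{k=1}^{Q} (1 − ∑_{j<k} F(j))`. -/
noncomputable def queuePi (Q : ℕ) (s : ℝ) (F : ℕ → ℝ) (k : Fin (Q + 1)) : ℝ :=
  if (k : ℕ) = 0 then
    1 / (1 + s * ∑ m ∈ Finset.Icc 1 Q, (1 - ∑ j ∈ Finset.range m, F j))
  else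
    s * (1 / (1 + s * ∑ m ∈ Finset.Icc 1 Q, (1 - ∑ j ∈ Finset.range m, F j))) *
      (1 - ∑ j ∈ Finset.range (k : ℕ), F j)

/-- ℕ-indexed version of `queueP`, convenient for summation over `Finset.range`. -/
noncomputable def queuePn (Q : ℕ) (s : ℝ) (F : ℕ → ℝ) (i j : ℕ) : ℝ :=
  if i = 0 then
    if j = 0 then 1 - s + s * F 0
    else if j = Q then s * (1 - ∑ m ∈ Finset.range Q, F m)
    else s * F j
  else if j + 1 = i then 1 else 0

/-- ℕ-indexed version of `queuePi`. -/
noncomputable def queuePin (Q : ℕ) (s : ℝ) (F : ℕ → ℝ) (k : ℕ) : ℝ :=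
  if k = 0 then
    1 / (1 + s * ∑ m ∈ Finset.Icc 1 Q, (1 - ∑ j ∈ Finset.range m, F j))
  else
    s * (1 / (1 + s * ∑ m ∈ Finset.Icc 1 Q, (1 - ∑ j ∈ Finset.range m, F j))) *
      (1 - ∑ j ∈ Finset.range k, F j)

/-- For `Q ≥ 1`, `0 < s ≤ 1` and an arrival pmf `F`, the vector `π` defined
above is a probability vector, `P` is a stochastic matrix, and `π` is stationary for `P`. -/
theorem queue_stationary_distribution
    (Q : ℕ) (hQ : 1 ≤ Q) (s : ℝ) (hs0 : 0 < s) (hs1 : s ≤ 1)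
    (F : ℕ → ℝ) (hF0 : ∀ j, 0 ≤ F j) (hFsum : ∑' j, F j = 1) :
    (∀ q : Fin (Q + 1), 0 ≤ queuePi Q s F q) ∧
    (∑ q : Fin (Q + 1), queuePi Q s F q = 1) ∧
    (∀ q : Fin (Q + 1), (∀ j, 0 ≤ queueP Q s F q j) ∧
      ∑ j : Fin (Q + 1), queueP Q s F q j = 1) ∧
    (∀ k : Fin (Q + 1), ∑ q : Fin (Q + 1), queuePi Q s F q * queueP Q s F q k
      = queuePi Q s F k) := by
  have hQ0 : Q ≠ 0 := by omega
  -- summability and partial-sum facts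
  have hsummable : Summable F := by
    by_contra h
    rw [tsum_eq_zero_of_not_summable h] at hFsum
    norm_num at hFsum
  have hS_nonneg : ∀ m, 0 ≤ ∑ j ∈ Finset.range m, F j :=
    fun m => Finset.sum_nonneg fun j _ => hF0 j
  have hS_le : ∀ m, ∑ j ∈ Finset.range m, F j ≤ 1 := by
    intro m
    calc ∑ j ∈ Finset.range m, F j ≤ ∑' j, F j :=
          Summable.sum_le_tsum (Finset.range m) (fun j _ => hF0 j) hsummable
      _ = 1 := hFsum
  set c := ∑ m ∈ Finset.Icc 1 Q, (1 - ∑ j ∈ Finset.range m, F j) with hc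
  have hc_nonneg : 0 ≤ c :=
    Finset.sum_nonneg fun m _ => by linarith [hS_le m]
  have hden : (0:ℝ) < 1 + s * c := by nlinarith
  have hden' : (1:ℝ) + s * c ≠ 0 := ne_of_gt hden
  have hp0_pos : 0 < 1 / (1 + s * c) := by positivity
  -- identification with the ℕ-indexed versions
  have hP : ∀ i j : Fin (Q+1), queueP Q s F i j = queuePn Q s F (i:ℕ) (j:ℕ) :=
    fun _ _ => rfl
  have hPi : ∀ k : Fin (Q+1), queuePi Q s F k = queuePin Q s F (k:ℕ) :=
    fun _ => rfl
  have hpin_nonneg : ∀ k, 0 ≤ queuePin Q s F k := by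
    intro k
    unfold queuePin
    rw [← hc]
    split_ifs
    · positivity
    · have := hS_le k
      have h1 : 0 ≤ 1 - ∑ j ∈ Finset.range k, F j := by linarith
      positivity
  refine ⟨fun q => by rw [hPi]; exact hpin_nonneg _, ?_, ?_, ?_⟩
  · -- π sums to 1
    have h1 : ∑ q : Fin (Q+1), queuePi Q s F q
        = ∑ k ∈ Finset.range (Q+1), queuePin Q s F k := by
      rw [← Fin.sum_univ_eq_sum_range (queuePin Q s F) (Q+1)]
      exact Finset.sum_congr rfl fun k _ => hPi k
    rw [h1, Finset.sum_range_succ']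
    have h2 : ∀ i, queuePin Q s F (i+1)
        = s * (1 / (1 + s * c)) * (1 - ∑ j ∈ Finset.range (i+1), F j) := by
      intro i; unfold queuePin; rw [← hc]; simp
    have h3 : queuePin Q s F 0 = 1 / (1 + s * c) := by
      unfold queuePin; rw [← hc]; simp
    have h4 : c = ∑ i ∈ Finset.range Q, (1 - ∑ j ∈ Finset.range (1+i), F j) := by
      rw [hc, ← Finset.Ico_add_one_right_eq_Icc, Finset.sum_Ico_eq_sum_range]
      simp
    calc (∑ i ∈ Finset.range Q, queuePin Q s F (i+1)) + queuePin Q s F 0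
        = (∑ i ∈ Finset.range Q,
            s * (1 / (1 + s * c)) * (1 - ∑ j ∈ Finset.range (1+i), F j))
            + 1 / (1 + s * c) := by
          rw [h3]
          congr 1
          refine Finset.sum_congr rfl fun i _ => ?_
          rw [h2 i, add_comm 1 i]
      _ = s * (1 / (1 + s * c)) * c + 1 / (1 + s * c) := by
          rw [← Finset.mul_sum, ← h4]
      _ = 1 := by field_simp; ring
  · -- P is a stochastic matrix
    intro q
    constructor
    · intro j
      rw [hP]
      unfold queuePn
      split_ifs
      · nlinarith [hF0 0]
      · nlinarith [hS_le Q]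
      · exact mul_nonneg hs0.le (hF0 _)
      · norm_num
      · exact le_refl 0
    · have hrow : ∑ j : Fin (Q+1), queueP Q s F q j
          = ∑ j ∈ Finset.range (Q+1), queuePn Q s F (q:ℕ) j := by
        rw [← Fin.sum_univ_eq_sum_range (queuePn Q s F (q:ℕ)) (Q+1)]
        exact Finset.sum_congr rfl fun j _ => hP q j
      rw [hrow]
      rcases Nat.eq_zero_or_pos (q:ℕ) with hq | hq
      · -- row 0
        rw [hq, Finset.sum_range_succ]
        have hterm : ∀ j ∈ Finset.range Q, queuePn Q s F 0 j
            = (if j = 0 then 1 - s else 0) + s * F j := by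
          intro j hj
          have hjQ : j ≠ Q := by
            have := Finset.mem_range.mp hj; omega
          unfold queuePn
          rw [if_pos rfl]
          rcases eq_or_ne j 0 with h | h
          · rw [if_pos h, h]; simp
          · rw [if_neg h, if_neg hjQ, if_neg h]; ring
        rw [Finset.sum_congr rfl hterm, Finset.sum_add_distrib, ← Finset.mul_sum]
        have hQlast : queuePn Q s F 0 Q = s * (1 - ∑ m ∈ Finset.range Q, F m) := by
          unfold queuePn
          simp [hQ0]
        rw [hQlast]
        have hind : ∑ j ∈ Finset.range Q, (if j = 0 then (1:ℝ) - s else 0) = 1 - s := by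
          rw [Finset.sum_ite_eq' (Finset.range Q) 0 (fun _ => (1:ℝ) - s)]
          simp [Nat.pos_of_ne_zero hQ0]
        rw [hind]
        ring
      · -- row q ≥ 1: deterministic move
        have hqle : (q:ℕ) ≤ Q := Nat.lt_succ_iff.mp q.isLt
        have hterm : ∀ j ∈ Finset.range (Q+1), queuePn Q s F (q:ℕ) j
            = if j = (q:ℕ) - 1 then 1 else 0 := by
          intro j _
          unfold queuePn
          rw [if_neg (by omega : ¬ (q:ℕ) = 0)]
          congr 1
          simp only [eq_iff_iff]
          omega
        rw [Finset.sum_congr rfl hterm,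
          Finset.sum_ite_eq' (Finset.range (Q+1)) ((q:ℕ) - 1) (fun _ => (1:ℝ))]
        simp [Finset.mem_range]
  · -- stationarity
    intro k
    have hk : (k:ℕ) ≤ Q := Nat.lt_succ_iff.mp k.isLt
    have hL : ∑ q : Fin (Q+1), queuePi Q s F q * queueP Q s F q k
        = ∑ i ∈ Finset.range (Q+1), queuePin Q s F i * queuePn Q s F i (k:ℕ) := by
      rw [← Fin.sum_univ_eq_sum_range (fun i => queuePin Q s F i * queuePn Q s F i (k:ℕ)) (Q+1)]
      exact Finset.sum_congr rfl fun q _ => by rw [hPi, hP]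
    rw [hL, Finset.sum_range_succ']
    have hterm : ∀ i ∈ Finset.range Q,
        queuePin Q s F (i+1) * queuePn Q s F (i+1) (k:ℕ)
        = if i = (k:ℕ) then queuePin Q s F ((k:ℕ)+1) else 0 := by
      intro i _
      unfold queuePn
      rw [if_neg (by omega : ¬ i + 1 = 0)]
      rcases eq_or_ne i (k:ℕ) with h | h
      · subst h; simp
      · rw [if_neg (by omega), if_neg h]
        ring
    rw [Finset.sum_congr rfl hterm,
      Finset.sum_ite_eq' (Finset.range Q) ((k:ℕ)) (fun _ => queuePin Q s F ((k:ℕ)+1))]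
    have h3 : queuePin Q s F 0 = 1 / (1 + s * c) := by
      unfold queuePin; rw [← hc]; simp
    have h2 : ∀ m, m ≠ 0 → queuePin Q s F m
        = s * (1 / (1 + s * c)) * (1 - ∑ j ∈ Finset.range m, F j) := by
      intro m hm; unfold queuePin; rw [← hc, if_neg hm]
    rw [hPi]
    rcases Nat.eq_zero_or_pos (k:ℕ) with hk0 | hk0
    · -- k = 0
      have hP00 : queuePn Q s F 0 0 = 1 - s + s * F 0 := by
        unfold queuePn; simp
      rw [hk0, hP00, h3, if_pos (Finset.mem_range.mpr (by omega)),
        h2 1 one_ne_zero, Finset.sum_range_one]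
      ring
    · rcases eq_or_ne (k:ℕ) Q with hkQ | hkQ
      · -- k = Q
        have hP0Q : queuePn Q s F 0 (k:ℕ) = s * (1 - ∑ m ∈ Finset.range Q, F m) := by
          unfold queuePn
          rw [if_pos rfl, if_neg (by omega), if_pos hkQ]
        rw [hP0Q, h3, if_neg (by simp [Finset.mem_range]; omega),
          h2 (k:ℕ) (by omega), hkQ]
        ring
      · -- 1 ≤ k < Q
        have hP0k : queuePn Q s F 0 (k:ℕ) = s * F (k:ℕ) := by
          unfold queuePn
          rw [if_pos rfl, if_neg (by omega), if_neg hkQ]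
        rw [hP0k, h3, if_pos (Finset.mem_range.mpr (by omega)),
          h2 ((k:ℕ)+1) (by omega), h2 (k:ℕ) (by omega),
          Finset.sum_range_succ]
        ring
end
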